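/- arXiv:2301.01958 — 9 statements merged into one kernel-verified Lean document; each statement's English description precedes it below -/
import Mathlib

section
/- For any integers m, d ≥ 1 and any functions a_1, ..., a_d : [s] → ℕ with s = (m-1)·m^d + 1, there exists a subset X ⊆ [s] of size m such that for every i ∈ [d], the sum over x ∈ X of a_i(x) is a multiple of m. -/
open Finset

theorem davenport_pigeonhole (m d : ℕ) (hm : 1 ≤ m) (hd : 1 ≤ d)
    (a : Fin d → Fin ((m - 1) * m ^ d + 1) → ℕ) :
    ∃ X : Finset (Fin ((m - 1) * m ^ d + 1)), X.card = m ∧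
      ∀ i : Fin d, m ∣ ∑ x ∈ X, a i x := by
  haveI : NeZero m := ⟨by omega⟩
  set f : Fin ((m - 1) * m ^ d + 1) → (Fin d → ZMod m) :=
    fun x i => (a i x : ZMod m) with hf
  have hcard : (univ : Finset (Fin d → ZMod m)).card * (m - 1) <
      (univ : Finset (Fin ((m - 1) * m ^ d + 1))).card := by
    simp [Fintype.card_fun, ZMod.card, mul_comm]
  obtain ⟨y, -, hy⟩ := exists_lt_card_fiber_of_mul_lt_card_of_maps_to
    (f := f) (fun x _ => mem_univ _) hcard
  have hy' : m ≤ (univ.filter fun x => f x = y).card := by omega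
  obtain ⟨X, hXsub, hXcard⟩ := Finset.exists_subset_card_eq hy'
  refine ⟨X, hXcard, fun i => ?_⟩
  have : ((∑ x ∈ X, a i x : ℕ) : ZMod m) = 0 := by
    push_cast
    have : ∀ x ∈ X, (a i x : ZMod m) = y i := by
      intro x hx
      have := hXsub hx
      simp only [mem_filter] at this
      exact congrFun this.2 i
    rw [Finset.sum_congr rfl this, Finset.sum_const, hXcard]
    simp
  exact (ZMod.natCast_eq_zero_iff _ _).mp this
end

section
/- Let f : Q^n → Q^n with |Q| = q and suppose the interaction graph G(f) has a vertex i whose strict in-degree is at most n-k-1 (i.e., there is a set I of k indices, not containing i, such that f_i(x) does not depend on the coordinates in I). Then the partition A = {A_1, ..., A_q} of Q^n, where A_p = {x : x_i = p-1}, is a balanced k-nice partition of f: each |A_p| = q^{n-1}, and for all p, ℓ ∈ [q], |A_ℓ ∩ f^{-1}(A_p)| is a multiple of q^k. -/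
open Finset

/-- `Depends f j i` : the interaction graph `G(f)` has an arc from `j` to `i`,
i.e. the local function `f_i` depends on input `j`. -/
def Depends {n q : ℕ} (f : (Fin n → Fin q) → (Fin n → Fin q)) (j i : Fin n) : Prop :=
  ∃ x y : Fin n → Fin q, (∀ k, k ≠ j → x k = y k) ∧ f x i ≠ f y i

lemma indep_of_not_depends {n q : ℕ} (f : (Fin n → Fin q) → (Fin n → Fin q)) (i : Fin n)
    (I : Finset (Fin n)) (hdep : ∀ j ∈ I, ¬ Depends f j i) :
    ∀ s : Finset (Fin n), s ⊆ I → ∀ x y : Fin n → Fin q,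
      (∀ m, m ∉ s → x m = y m) → f x i = f y i := by
  intro s
  induction s using Finset.induction_on with
  | empty =>
    intro _ x y h
    have : x = y := funext fun m => h m (Finset.notMem_empty m)
    rw [this]
  | insert a t ha ih =>
    intro hsub x y hxy
    set z := Function.update x a (y a) with hz
    have h1 : f x i = f z i := by
      by_contra hne
      exact hdep a (hsub (Finset.mem_insert_self a t))
        ⟨x, z, fun m hm => (Function.update_of_ne hm _ _).symm, hne⟩
    have h2 : f z i = f y i := by
      refine ih (fun m hm => hsub (Finset.mem_insert_of_mem hm)) z y fun m hm => ?_
      by_cases hma : m = a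
      · subst hma; simp [hz]
      · rw [hz, Function.update_of_ne hma]
        exact hxy m (by simp [hma, hm])
    exact h1.trans h2

theorem balanced_nice_of_small_strict_indegree {n q k : ℕ} (hn : 1 ≤ n) (hq : 1 ≤ q)
    (f : (Fin n → Fin q) → (Fin n → Fin q)) (i : Fin n)
    (I : Finset (Fin n)) (hI : I.card = k) (hiI : i ∉ I)
    (hdep : ∀ j ∈ I, ¬ Depends f j i) :
    (∀ p : Fin q,
      (univ.filter (fun x : Fin n → Fin q => x i = p)).card = q ^ (n - 1)) ∧
    (∀ p ℓ : Fin q,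
      q ^ k ∣ (univ.filter (fun x : Fin n → Fin q => x i = ℓ ∧ f x i = p)).card) := by
  constructor
  · intro p
    set e := Equiv.funSplitAt i (Fin q) with he
    have hmap : (univ.filter (fun x : Fin n → Fin q => x i = p)).map e.toEmbedding
        = ({p} : Finset (Fin q)) ×ˢ univ := by
      ext z
      simp only [Finset.mem_map, Finset.mem_filter, Finset.mem_univ, true_and,
        Finset.mem_product, Finset.mem_singleton, Equiv.coe_toEmbedding]
      constructor
      · rintro ⟨x, hx, rfl⟩
        exact ⟨hx, trivial⟩
      · rintro ⟨h1, -⟩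
        refine ⟨e.symm z, ?_, e.apply_symm_apply z⟩
        have : (e.symm z) i = z.1 := by simp [he]
        rw [this, h1]
    have hc := congrArg Finset.card hmap
    rw [Finset.card_map] at hc
    rw [hc, Finset.card_product, Finset.card_singleton, one_mul, Finset.card_univ,
      Fintype.card_fun, Fintype.card_fin]
    congr 1
    rw [Fintype.card_subtype_compl, Fintype.card_subtype_eq, Fintype.card_fin]
  · intro p ℓ
    classical
    set e := Equiv.piEquivPiSubtypeProd (fun j => j ∈ I) (fun _ : Fin n => Fin q) with he
    have hiI' : ¬ (i ∈ I) := hiI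
    -- key: predicate depends only on second component
    have key : ∀ (a a' : {j : Fin n // j ∈ I} → Fin q) (b : {j : Fin n // ¬ j ∈ I} → Fin q),
        ((e.symm (a, b)) i = ℓ ∧ f (e.symm (a, b)) i = p) ↔
        ((e.symm (a', b)) i = ℓ ∧ f (e.symm (a', b)) i = p) := by
      intro a a' b
      have hcoord : ∀ (c : {j : Fin n // j ∈ I} → Fin q) (m : Fin n) (hm : ¬ m ∈ I),
          (e.symm (c, b)) m = b ⟨m, hm⟩ := by
        intro c m hm
        simp [he, Equiv.piEquivPiSubtypeProd, hm]
      have hiv : (e.symm (a, b)) i = (e.symm (a', b)) i := by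
        rw [hcoord a i hiI', hcoord a' i hiI']
      have hfv : f (e.symm (a, b)) i = f (e.symm (a', b)) i := by
        refine indep_of_not_depends f i I hdep I (Finset.Subset.refl I) _ _ fun m hm => ?_
        rw [hcoord a m hm, hcoord a' m hm]
      rw [hiv, hfv]
    set a0 : {j : Fin n // j ∈ I} → Fin q := fun _ => ⟨0, hq⟩ with ha0
    set T : Finset ({j : Fin n // ¬ j ∈ I} → Fin q) :=
      univ.filter (fun b => (e.symm (a0, b)) i = ℓ ∧ f (e.symm (a0, b)) i = p) with hT
    have hmap : (univ.filter (fun x : Fin n → Fin q => x i = ℓ ∧ f x i = p)).map e.toEmbedding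
        = (univ : Finset ({j : Fin n // j ∈ I} → Fin q)) ×ˢ T := by
      ext z
      obtain ⟨z1, z2⟩ := z
      simp only [Finset.mem_map, Finset.mem_filter, Finset.mem_univ, true_and,
        Finset.mem_product, hT, Equiv.coe_toEmbedding]
      constructor
      · rintro ⟨x, hx, hez⟩
        have hx' : x = e.symm (z1, z2) := by rw [← hez, Equiv.symm_apply_apply]
        rw [hx'] at hx
        exact (key z1 a0 z2).mp hx
      · intro h
        refine ⟨e.symm (z1, z2), (key a0 z1 z2).mp h, e.apply_symm_apply _⟩
    have hc := congrArg Finset.card hmap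
    rw [Finset.card_map] at hc
    rw [hc, Finset.card_product, Finset.card_univ, Fintype.card_fun,
      Fintype.card_coe, hI, Fintype.card_fin]
    exact Dvd.intro _ rfl
end

section
/- Let f : Q^n → Q^n with |Q| = q, let 1 ≤ k < n, and suppose f admits a balanced k-nice partition. Then there exists h isomorphic to f (i.e., h = π ∘ f ∘ π^{-1} for some permutation π of Q^n) such that the interaction graph G(h) has a vertex of strict in-degree at most n-k-1. -/
open Finset
open scoped Classical

private lemma geom_pred (q : ℕ) (hq : 1 ≤ q) :
    ∀ K : ℕ, (∑ i ∈ Finset.range K, (q - 1) * q ^ i) = q ^ K - 1 := by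
  intro K
  induction K with
  | zero => simp
  | succ K ih =>
    rw [Finset.sum_range_succ, ih, pow_succ]
    have ha : 1 ≤ q ^ K := Nat.one_le_pow _ _ hq
    have h1 : (q - 1) * q ^ K = q * q ^ K - q ^ K := by
      rw [Nat.sub_mul, one_mul]
    have h2 : q ^ K ≤ q ^ K * q := Nat.le_mul_of_pos_right _ hq
    rw [h1]
    have h3 : q * q ^ K = q ^ K * q := Nat.mul_comm _ _
    omega

private lemma low_lt {q m K : ℕ} (hq : 1 ≤ q) (g : Fin m → Fin q) :
    (∑ i ∈ Finset.univ.filter (fun i : Fin m => i.val < K), (g i).val * q ^ (i : ℕ)) < q ^ K := by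
  have step1 : (∑ i ∈ Finset.univ.filter (fun i : Fin m => i.val < K), (g i).val * q ^ (i : ℕ))
      ≤ ∑ i ∈ Finset.univ.filter (fun i : Fin m => i.val < K), (q - 1) * q ^ (i : ℕ) := by
    refine Finset.sum_le_sum fun i _ => Nat.mul_le_mul_right _ ?_
    have := (g i).isLt; omega
  have step2 : (∑ i ∈ Finset.univ.filter (fun i : Fin m => i.val < K), (q - 1) * q ^ (i : ℕ))
      = ∑ i ∈ (Finset.range m).filter (fun i => i < K), (q - 1) * q ^ i := by
    rw [Finset.sum_filter, Finset.sum_filter]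
    exact Fin.sum_univ_eq_sum_range (fun a => if a < K then (q - 1) * q ^ a else 0) m
  have step3 : (∑ i ∈ (Finset.range m).filter (fun i => i < K), (q - 1) * q ^ i)
      ≤ ∑ i ∈ Finset.range K, (q - 1) * q ^ i := by
    refine Finset.sum_le_sum_of_subset ?_
    intro i hi
    simp only [Finset.mem_filter, Finset.mem_range] at *
    omega
  have := geom_pred q hq K
  have hK : 1 ≤ q ^ K := Nat.one_le_pow _ _ hq
  omega

private lemma div_high {q m K : ℕ} (hq : 1 ≤ q) (g1 g2 : Fin m → Fin q)
    (h : ∀ j : Fin m, K ≤ j.val → g1 j = g2 j) :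
    (∑ i : Fin m, (g1 i).val * q ^ (i : ℕ)) / q ^ K
      = (∑ i : Fin m, (g2 i).val * q ^ (i : ℕ)) / q ^ K := by
  have split : ∀ g : Fin m → Fin q, (∑ i : Fin m, (g i).val * q ^ (i : ℕ))
      = (∑ i ∈ Finset.univ.filter (fun i : Fin m => i.val < K), (g i).val * q ^ (i : ℕ))
        + (∑ i ∈ Finset.univ.filter (fun i : Fin m => ¬ i.val < K), (g i).val * q ^ (i : ℕ)) :=
    fun g => (Finset.sum_filter_add_sum_filter_not _ _ _).symm
  have hhigh : (∑ i ∈ Finset.univ.filter (fun i : Fin m => ¬ i.val < K), (g1 i).val * q ^ (i : ℕ))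
      = ∑ i ∈ Finset.univ.filter (fun i : Fin m => ¬ i.val < K), (g2 i).val * q ^ (i : ℕ) := by
    refine Finset.sum_congr rfl fun i hi => ?_
    rw [h i (by simp only [Finset.mem_filter] at hi; omega)]
  have hdvd : q ^ K ∣ ∑ i ∈ Finset.univ.filter (fun i : Fin m => ¬ i.val < K),
      (g2 i).val * q ^ (i : ℕ) := by
    refine Finset.dvd_sum fun i hi => Dvd.dvd.mul_left (pow_dvd_pow q ?_) _
    simp only [Finset.mem_filter] at hi; omega
  obtain ⟨c, hc⟩ := hdvd
  have hpos : 0 < q ^ K := Nat.pow_pos hq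
  rw [split g1, split g2, hhigh, hc]
  rw [Nat.add_mul_div_left _ _ hpos, Nat.add_mul_div_left _ _ hpos,
    Nat.div_eq_of_lt (low_lt hq g1), Nat.div_eq_of_lt (low_lt hq g2)]

private lemma dvd_filter_comp {α : Type*} [DecidableEq α] {q K : ℕ}
    (s : Finset α) (t : α → Fin q)
    (hdvd : ∀ p, q ^ K ∣ (s.filter (fun y => t y = p)).card)
    (P : Fin q → Prop) [DecidablePred P] :
    q ^ K ∣ (s.filter (fun y => P (t y))).card := by
  have hcard : (s.filter (fun y => P (t y))).card
      = ∑ p ∈ Finset.univ.filter P, (s.filter (fun y => t y = p)).card := by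
    rw [Finset.card_eq_sum_card_fiberwise
      (f := t) (t := Finset.univ.filter P) (fun x hx => by
        simp only [Finset.mem_coe, Finset.mem_filter] at hx ⊢; exact ⟨Finset.mem_univ _, hx.2⟩)]
    refine Finset.sum_congr rfl fun p hp => ?_
    congr 1
    ext y
    simp only [Finset.mem_filter] at hp ⊢
    constructor
    · rintro ⟨⟨hy, _⟩, h2⟩; exact ⟨hy, h2⟩
    · rintro ⟨hy, h2⟩; exact ⟨⟨hy, h2 ▸ hp.2⟩, h2⟩
  rw [hcard]
  exact Finset.dvd_sum fun p _ => hdvd p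

private lemma enum_exists {α : Type*} [Fintype α] [DecidableEq α] (q K : ℕ)
    (s : Finset α) (t : α → Fin q)
    (hdvd : ∀ p, q ^ K ∣ (s.filter (fun y => t y = p)).card) :
    ∃ e : {x // x ∈ s} ≃ Fin s.card, ∀ a b : {x // x ∈ s},
      (e a : ℕ) / q ^ K = (e b : ℕ) / q ^ K → t a.1 = t b.1 := by
  classical
  set N := Fintype.card α with hN
  let emb := Fintype.equivFin α
  let key : α → ℕ := fun x => (t x).val * N + (emb x).val
  have hembN : ∀ x, (emb x).val < N := fun x => (emb x).isLt
  have keylt : ∀ x y, t x < t y → key x < key y := by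
    intro x y hxy
    have h1 : (t x).val + 1 ≤ (t y).val := hxy
    have h2 := hembN x
    have h3 := hembN y
    simp only [key]
    nlinarith [Nat.mul_le_mul_right N h1]
  have tle_of_keyle : ∀ x y, key x ≤ key y → t x ≤ t y := by
    intro x y h
    by_contra hc
    exact absurd (keylt y x (lt_of_not_ge hc)) (by omega)
  have hinj : Function.Injective key := by
    intro a b hab
    have hta : t a = t b := le_antisymm (tle_of_keyle a b hab.le) (tle_of_keyle b a hab.ge)
    have : (emb a).val = (emb b).val := by
      simp only [key, hta] at hab; omega
    exact emb.injective (Fin.val_injective this)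
  letI : LinearOrder α := LinearOrder.lift' key hinj
  have hle_iff : ∀ x y : α, x ≤ y ↔ key x ≤ key y := fun _ _ => Iff.rfl
  let e0 := s.orderIsoOfFin rfl
  refine ⟨e0.toEquiv.symm, ?_⟩
  have mono : ∀ a b : {x // x ∈ s}, (e0.symm a : ℕ) ≤ (e0.symm b : ℕ) ↔ key a.1 ≤ key b.1 := by
    intro a b
    rw [← hle_iff]
    constructor
    · intro h
      have := e0.le_iff_le.mpr (show e0.symm a ≤ e0.symm b from h)
      simpa using this
    · intro h
      have : e0 (e0.symm a) ≤ e0 (e0.symm b) := by simpa using h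
      exact e0.le_iff_le.mp this
  have monolt : ∀ a b : {x // x ∈ s}, (e0.symm a : ℕ) < (e0.symm b : ℕ) ↔ key a.1 < key b.1 := by
    intro a b
    rw [← Nat.not_le, ← Nat.not_le, mono]
  -- bound1 : rank below
  have bound1 : ∀ a : {x // x ∈ s},
      (s.filter (fun y => t y < t a.1)).card ≤ (e0.symm a : ℕ) := by
    intro a
    have := Finset.card_le_card_of_injOn
      (f := fun y => if h : y ∈ s then ((e0.symm ⟨y, h⟩ : Fin s.card) : ℕ) else 0)
      (s := s.filter (fun y => t y < t a.1)) (t := Finset.range (e0.symm a : ℕ)) ?_ ?_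
    · simpa using this
    · intro y hy
      simp only [Finset.mem_coe, Finset.mem_filter] at hy
      simp only [Finset.mem_coe]
      rw [dif_pos hy.1, Finset.mem_range]
      exact (monolt ⟨y, hy.1⟩ a).mpr (keylt _ _ hy.2)
    · intro y1 h1 y2 h2 hval
      simp only [Finset.mem_coe, Finset.mem_filter] at h1 h2
      simp only [] at hval
      rw [dif_pos h1.1, dif_pos h2.1] at hval
      have := e0.symm.injective (Fin.val_injective hval)
      exact Subtype.ext_iff.mp this
  -- bound2 : rank above
  have bound2 : ∀ a : {x // x ∈ s},
      (e0.symm a : ℕ) < (s.filter (fun y => t y ≤ t a.1)).card := by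
    intro a
    have hcard := Finset.card_le_card_of_injOn
      (f := fun i : ℕ => if h : i < s.card then ((e0 ⟨i, h⟩ : {x // x ∈ s}) : α) else a.1)
      (s := Finset.range ((e0.symm a : ℕ) + 1)) (t := s.filter (fun y => t y ≤ t a.1)) ?_ ?_
    · simpa using hcard
    · intro i hi
      simp only [Finset.mem_coe, Finset.mem_range] at hi
      have hi' : i < s.card := lt_of_lt_of_le hi (Nat.succ_le_of_lt (e0.symm a).isLt)
      simp only [Finset.mem_coe]
      rw [dif_pos hi']
      simp only [Finset.mem_filter]
      refine ⟨(e0 ⟨i, hi'⟩).2, ?_⟩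
      refine tle_of_keyle _ _ ?_
      rw [← mono ⟨(e0 ⟨i, hi'⟩ : α), (e0 ⟨i, hi'⟩).2⟩ a]
      have : (e0.symm ⟨(e0 ⟨i, hi'⟩ : α), (e0 ⟨i, hi'⟩).2⟩ : ℕ) = i := by
        have : (⟨(e0 ⟨i, hi'⟩ : α), (e0 ⟨i, hi'⟩).2⟩ : {x // x ∈ s}) = e0 ⟨i, hi'⟩ := rfl
        rw [this]; simp
      rw [this]; omega
    · intro i1 h1 i2 h2 hval
      simp only [Finset.mem_coe, Finset.mem_range] at h1 h2
      have h1' : i1 < s.card := lt_of_lt_of_le h1 (Nat.succ_le_of_lt (e0.symm a).isLt)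
      have h2' : i2 < s.card := lt_of_lt_of_le h2 (Nat.succ_le_of_lt (e0.symm a).isLt)
      simp only [] at hval
      rw [dif_pos h1', dif_pos h2'] at hval
      have := e0.injective (Subtype.ext hval)
      exact congrArg Fin.val this
  -- final
  intro a b hdiv
  by_contra hne
  have main : ∀ a b : {x // x ∈ s}, t a.1 < t b.1 →
      (e0.symm a : ℕ) / q ^ K < (e0.symm b : ℕ) / q ^ K := by
    intro a b hab
    have h1 : (e0.symm a : ℕ) < (s.filter (fun y => t y ≤ t a.1)).card := bound2 a
    have h2 : (s.filter (fun y => t y ≤ t a.1)).card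
        ≤ (s.filter (fun y => t y < t b.1)).card := by
      refine Finset.card_le_card (Finset.monotone_filter_right s ?_)
      intro y _ h
      exact lt_of_le_of_lt h hab
    have h3 := bound1 b
    have hdq : q ^ K ∣ (s.filter (fun y => t y ≤ t a.1)).card :=
      dvd_filter_comp s t hdvd (fun p => p ≤ t a.1)
    calc (e0.symm a : ℕ) / q ^ K
        < (s.filter (fun y => t y ≤ t a.1)).card / q ^ K :=
          Nat.div_lt_div_of_lt_of_dvd hdq h1
      _ ≤ (e0.symm b : ℕ) / q ^ K := Nat.div_le_div_right (le_trans h2 h3)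
  rcases lt_or_gt_of_ne hne with h | h
  · exact absurd hdiv (Nat.ne_of_lt (main a b h))
  · exact absurd hdiv.symm (Nat.ne_of_lt (main b a h))

theorem small_strict_indegree_of_balanced_nice {n q k : ℕ} (hq : 2 ≤ q)
    (hk : 1 ≤ k) (hkn : k < n)
    (f : (Fin n → Fin q) → (Fin n → Fin q))
    (A : Fin q → Finset (Fin n → Fin q))
    (hpart : ∀ x, ∃! p, x ∈ A p)
    (hbal : ∀ p, (A p).card = q ^ (n - 1))
    (hnice : ∀ p ℓ : Fin q, q ^ k ∣ ((A ℓ).filter (fun x => f x ∈ A p)).card) :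
    ∃ π : Equiv.Perm (Fin n → Fin q), ∃ i : Fin n,
      (univ.filter (fun j => j ≠ i ∧
        Depends (fun x => π (f (π.symm x))) j i)).card ≤ n - k - 1 := by
  classical
  rcases n with _ | m
  · omega
  have hkm : k ≤ m := by omega
  have hq1 : 1 ≤ q := by omega
  -- the part function
  have hPart : ∀ x : Fin (m+1) → Fin q, ∃ p, x ∈ A p := fun x => (hpart x).exists
  set part : (Fin (m+1) → Fin q) → Fin q := fun x => (hPart x).choose with hpartdef
  have part_mem : ∀ x, x ∈ A (part x) := fun x => (hPart x).choose_spec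
  have part_eq : ∀ x p, x ∈ A p → part x = p := by
    intro x p hp
    obtain ⟨p', hp', huniq⟩ := hpart x
    rw [huniq _ (part_mem x), huniq _ hp]
  have part_iff : ∀ x p, part x = p ↔ x ∈ A p := by
    intro x p
    constructor
    · rintro rfl; exact part_mem x
    · exact part_eq x p
  -- per-slab enumerations
  have Hslab : ∀ ℓ : Fin q, ∃ e : {x // x ∈ A ℓ} ≃ Fin ((A ℓ).card),
      ∀ a b : {x // x ∈ A ℓ},
        (e a : ℕ) / q ^ k = (e b : ℕ) / q ^ k → part (f a.1) = part (f b.1) := by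
    intro ℓ
    apply enum_exists q k (A ℓ) (fun x => part (f x))
    intro p
    have heq : (A ℓ).filter (fun y => part (f y) = p)
        = (A ℓ).filter (fun y => f y ∈ A p) := by
      apply Finset.filter_congr
      intro y _
      exact part_iff (f y) p
    rw [heq]
    exact hnice p ℓ
  choose e he using Hslab
  have hcard : ∀ ℓ : Fin q, (A ℓ).card = q ^ m := by
    intro ℓ; rw [hbal ℓ]; norm_num
  set E : ∀ ℓ : Fin q, {x // part x = ℓ} ≃ Fin (q ^ m) := fun ℓ =>
    ((Equiv.subtypeEquivRight (fun x => part_iff x ℓ)).trans (e ℓ)).trans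
      (finCongr (hcard ℓ)) with hEdef
  set revE : (Fin m → Fin q) ≃ (Fin m → Fin q) :=
    ⟨fun g => g ∘ Fin.rev, fun g => g ∘ Fin.rev,
      fun g => by funext j; simp [Function.comp, Fin.rev_rev],
      fun g => by funext j; simp [Function.comp, Fin.rev_rev]⟩ with hrevEdef
  set π : Equiv.Perm (Fin (m+1) → Fin q) :=
    (Equiv.sigmaFiberEquiv part).symm.trans
      ((Equiv.sigmaCongrRight E).trans
        ((Equiv.sigmaEquivProd (Fin q) (Fin (q ^ m))).trans
          ((Equiv.prodCongr (Equiv.refl (Fin q)) (finFunctionFinEquiv.symm.trans revE)).trans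
            (Fin.insertNthEquiv (fun _ : Fin (m+1) => Fin q) 0)))) with hπdef
  have hπ : ∀ z, π z = Fin.insertNth 0 (part z)
      (fun j => finFunctionFinEquiv.symm (E (part z) ⟨z, rfl⟩) (Fin.rev j)) := fun z => rfl
  have hA0 : ∀ z, π z 0 = part z := by
    intro z
    rw [hπ z]
    exact Fin.insertNth_apply_same 0 _ _
  have hB : ∀ z (j : Fin m), π z j.succ
      = finFunctionFinEquiv.symm (E (part z) ⟨z, rfl⟩) (Fin.rev j) := by
    intro z j
    rw [hπ z]
    exact Fin.insertNth_apply_succAbove 0 _ _ j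
  have hV : ∀ (u : Fin (m+1) → Fin q) (ℓ : Fin q) (hu : part u = ℓ),
      ((E (part u) ⟨u, rfl⟩ : Fin (q ^ m)) : ℕ)
        = ((e ℓ ⟨u, (part_iff u ℓ).mp hu⟩ : Fin ((A ℓ).card)) : ℕ) := by
    intro u ℓ hu
    subst hu
    rfl
  -- the key claim
  have claim : ∀ z w, (∀ i : Fin (m+1), i.val < m + 1 - k → π z i = π w i) →
      part (f z) = part (f w) := by
    intro z w hzw
    have h0 : part z = part w := by
      have h := hzw 0 (by simp; omega)
      rwa [hA0 z, hA0 w] at h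
    set g1 : Fin m → Fin q := finFunctionFinEquiv.symm (E (part z) ⟨z, rfl⟩) with hg1
    set g2 : Fin m → Fin q := finFunctionFinEquiv.symm (E (part w) ⟨w, rfl⟩) with hg2
    have hgeq : ∀ j : Fin m, k ≤ j.val → g1 j = g2 j := by
      intro j hj
      have hrev : (Fin.rev j).val = m - (j.val + 1) := rfl
      have hlt : ((Fin.rev j).succ : Fin (m+1)).val < m + 1 - k := by
        have hjm := j.isLt
        simp only [Fin.val_succ, hrev]
        omega
      have h := hzw (Fin.rev j).succ hlt
      rw [hB z (Fin.rev j), hB w (Fin.rev j), Fin.rev_rev] at h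
      exact h
    have e1 : finFunctionFinEquiv g1 = E (part z) ⟨z, rfl⟩ := Equiv.apply_symm_apply _ _
    have e2 : finFunctionFinEquiv g2 = E (part w) ⟨w, rfl⟩ := Equiv.apply_symm_apply _ _
    have hdiv : ((E (part z) ⟨z, rfl⟩ : Fin (q ^ m)) : ℕ) / q ^ k
        = ((E (part w) ⟨w, rfl⟩ : Fin (q ^ m)) : ℕ) / q ^ k := by
      rw [← e1, ← e2, finFunctionFinEquiv_apply, finFunctionFinEquiv_apply]
      exact div_high hq1 g1 g2 hgeq
    rw [hV z (part z) rfl, hV w (part z) h0.symm] at hdiv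
    exact he (part z) _ _ hdiv
  refine ⟨π, 0, ?_⟩
  have hsub : (univ.filter (fun j : Fin (m+1) => j ≠ 0 ∧
        Depends (fun x => π (f (π.symm x))) j 0))
      ⊆ univ.filter (fun j : Fin (m+1) => j ≠ 0 ∧ j.val < m + 1 - k) := by
    intro j hj
    simp only [Finset.mem_filter, Finset.mem_univ, true_and] at hj ⊢
    refine ⟨hj.1, ?_⟩
    by_contra hge
    push_neg at hge
    obtain ⟨x, y, hxy, hne⟩ := hj.2
    apply hne
    have hcl := claim (π.symm x) (π.symm y) ?_
    · show π (f (π.symm x)) 0 = π (f (π.symm y)) 0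
      rw [hA0, hA0, hcl]
    · intro i hi
      rw [Equiv.apply_symm_apply, Equiv.apply_symm_apply]
      apply hxy
      intro hij
      rw [hij] at hi
      omega
  refine le_trans (Finset.card_le_card hsub) ?_
  have hbound : (univ.filter (fun j : Fin (m+1) => j ≠ 0 ∧ j.val < m + 1 - k)).card
      ≤ (Finset.range (m - k)).card := by
    apply Finset.card_le_card_of_injOn (fun j => j.val - 1)
    · intro j hj
      simp only [Finset.mem_coe, Finset.mem_filter, Finset.mem_univ, true_and] at hj
      simp only [Finset.mem_coe, Finset.mem_range]
      have hv : j.val ≠ 0 := fun h => hj.1 (Fin.ext h)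
      omega
    · intro j1 h1 j2 h2 heq
      simp only [Finset.mem_coe, Finset.mem_filter, Finset.mem_univ, true_and] at h1 h2
      have hv1 : j1.val ≠ 0 := fun h => h1.1 (Fin.ext h)
      have hv2 : j2.val ≠ 0 := fun h => h2.1 (Fin.ext h)
      have heq' : j1.val - 1 = j2.val - 1 := heq
      exact Fin.ext (by omega)
  rw [Finset.card_range] at hbound
  omega
end

section
/- Let f : Q^n → Q^n with q ≥ 3 and n ≥ 2. Suppose f has a complete-pattern: there exist x ∈ Q^n and a set A ⊆ Q^n with |A| = n such that x, f(x) ∉ A ∪ f(A), and either x ≠ f(x) or A ∩ f(A) = ∅. Then there exists h isomorphic to f whose interaction graph G(h) is the complete digraph K_n (all n² arcs present, including loops). -/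
open Finset

lemma exists_perm_extend {α : Type*} [Fintype α] [DecidableEq α] (T : Finset α) (v : α → α)
    (hinj : Set.InjOn v T) : ∃ π : Equiv.Perm α, ∀ y ∈ T, π y = v y := by
  classical
  set S : Finset α := T.image v with hS
  have hcard : S.card = T.card := Finset.card_image_of_injOn hinj
  have hg : Function.Bijective (fun z : {y // y ∈ T} =>
      (⟨v z.1, Finset.mem_image_of_mem v z.2⟩ : {y // y ∈ S})) := by
    constructor
    · rintro ⟨y1, h1⟩ ⟨y2, h2⟩ h
      simpa using hinj h1 h2 (congrArg Subtype.val h)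
    · rintro ⟨s, hs⟩
      obtain ⟨z, hz, rfl⟩ := Finset.mem_image.1 hs
      exact ⟨⟨z, hz⟩, rfl⟩
  have e2 : {y // ¬ y ∈ T} ≃ {y // ¬ y ∈ S} := by
    apply Fintype.equivOfCardEq
    rw [Fintype.card_subtype_compl, Fintype.card_subtype_compl]
    simp [Fintype.card_coe, hcard]
  refine ⟨Equiv.subtypeCongr (Equiv.ofBijective _ hg) e2, fun y hy => ?_⟩
  simp [Equiv.subtypeCongr, hy]

theorem complete_of_complete_pattern {n q : ℕ} (hq : 3 ≤ q) (hn : 2 ≤ n)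
    (f : (Fin n → Fin q) → (Fin n → Fin q))
    (x : Fin n → Fin q) (A : Finset (Fin n → Fin q))
    (hA : A.card = n)
    (hx : x ∉ A ∪ A.image f) (hfx : f x ∉ A ∪ A.image f)
    (hpat : x ≠ f x ∨ Disjoint A (A.image f)) :
    ∃ π : Equiv.Perm (Fin n → Fin q),
      ∀ i j : Fin n, Depends (fun y => π (f (π.symm y))) j i := by
  classical
  rw [Finset.mem_union, not_or] at hx hfx
  obtain ⟨hxA, hxI⟩ := hx
  obtain ⟨hfxA, hfxI⟩ := hfx
  have hq1 : q = q - 1 + 1 := by omega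
  haveI : Nontrivial (Fin n) := ⟨⟨⟨0, by omega⟩, ⟨1, by omega⟩, by simp [Fin.ext_iff]⟩⟩
  set i0 : Fin n := ⟨0, by omega⟩ with hi0
  set o : Fin q := ⟨0, by omega⟩ with ho
  set l1 : Fin q := ⟨1, by omega⟩ with hl1
  set l2 : Fin q := ⟨2, by omega⟩ with hl2
  have hol : o ≠ l1 ∧ o ≠ l2 ∧ l1 ≠ l2 := by
    refine ⟨?_, ?_, ?_⟩ <;> simp [ho, hl1, hl2, Fin.ext_iff]
  -- enumeration of A
  obtain ⟨a, ha_def⟩ : ∃ a : Fin n → (Fin n → Fin q),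
      a = fun k => ((A.equivFin.symm (Fin.cast hA.symm k) : Fin n → Fin q)) := ⟨_, rfl⟩
  have ha_mem : ∀ k, a k ∈ A := fun k => by rw [ha_def]; exact Finset.coe_mem _
  obtain ⟨idx, hidx_def⟩ : ∃ g : ∀ y, y ∈ A → Fin n,
      g = fun y h => Fin.cast hA (A.equivFin ⟨y, h⟩) := ⟨_, rfl⟩
  have ha_idx : ∀ y (h : y ∈ A), a (idx y h) = y := by
    intro y h
    rw [ha_def, hidx_def]
    simp
  have hidx_a : ∀ k (h : a k ∈ A), idx (a k) h = k := by
    intro k h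
    have h2 : (⟨a k, h⟩ : {z // z ∈ A}) = A.equivFin.symm (Fin.cast hA.symm k) :=
      Subtype.ext (by simp only [ha_def])
    rw [hidx_def]
    simp only [h2]
    simp
  have ha_inj : Function.Injective a := by
    intro k1 k2 h
    have hs : (⟨a k1, ha_mem k1⟩ : {z // z ∈ A}) = ⟨a k2, ha_mem k2⟩ := Subtype.ext h
    calc k1 = idx (a k1) (ha_mem k1) := (hidx_a _ _).symm
      _ = Fin.cast hA (A.equivFin ⟨a k1, ha_mem k1⟩) := by rw [hidx_def]
      _ = Fin.cast hA (A.equivFin ⟨a k2, ha_mem k2⟩) := by rw [hs]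
      _ = idx (a k2) (ha_mem k2) := by rw [hidx_def]
      _ = k2 := hidx_a _ _
  -- key constants
  obtain ⟨F, hF_def⟩ : ∃ F : Finset (Fin n),
      F = Finset.univ.filter (fun k => a k ∈ A.image f) := ⟨_, rfl⟩
  obtain ⟨c, hc_def⟩ : ∃ c : Fin n → Fin q,
      c = fun i => if x = f x then o else if a i ∈ A.image f then l2 else l1 := ⟨_, rfl⟩
  obtain ⟨ev, he_def⟩ : ∃ ev : Fin n → Fin n → Fin q,
      ev = fun k i => if i = k then l1 else o := ⟨_, rfl⟩
  obtain ⟨z0, hz_def⟩ : ∃ z0 : Fin n → Fin q, z0 = fun _ => o := ⟨_, rfl⟩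
  obtain ⟨Rfin, hR_def⟩ : ∃ R : Finset (Fin n → Fin q),
      R = Finset.univ.filter (fun y => ∀ i, y i ≠ c i) := ⟨_, rfl⟩
  obtain ⟨V0, hV_def⟩ : ∃ V : Finset (Fin n → Fin q),
      V = insert z0 (Finset.univ.image ev) := ⟨_, rfl⟩
  obtain ⟨R', hR'_def⟩ : ∃ R' : Finset (Fin n → Fin q), R' = Rfin \ V0 := ⟨_, rfl⟩
  obtain ⟨B, hB_def⟩ : ∃ B : Finset (Fin n → Fin q),
      B = (A.image f) \ (insert x A) := ⟨_, rfl⟩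
  have hc_ne_o : x ≠ f x → ∀ i, c i ≠ o := by
    intro hxf i
    rw [hc_def]
    simp only [if_neg hxf]
    split
    · exact Ne.symm hol.2.1
    · exact Ne.symm hol.1
  -- cardinality chain
  have hcard1 : n + 1 ≤ (q-1)^n :=
    le_trans (Nat.lt_two_pow_self (n := n)) (Nat.pow_le_pow_left (by omega) n)
  have hRcard : (q-1)^n ≤ Rfin.card := by
    obtain ⟨Φ, hΦ⟩ : ∃ Φ : (Fin n → Fin (q-1)) → (Fin n → Fin q),
      Φ = fun y i => Fin.cast hq1.symm ((Fin.cast hq1 (c i)).succAbove (y i)) := ⟨_, rfl⟩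
    have hmaps : ∀ y : Fin n → Fin (q-1), Φ y ∈ Rfin := by
      intro y
      rw [hR_def, Finset.mem_filter]
      refine ⟨Finset.mem_univ _, fun i hEq => ?_⟩
      apply Fin.succAbove_ne (Fin.cast hq1 (c i)) (y i)
      have h2 := congrArg (Fin.cast hq1) hEq
      rw [hΦ] at h2
      simpa using h2
    have hinjΦ : Set.InjOn Φ (Finset.univ : Finset (Fin n → Fin (q-1))) := by
      intro y1 _ y2 _ h
      funext i
      have h2 := congrFun h i
      rw [hΦ] at h2
      simp only at h2
      have h3 := Fin.cast_injective hq1.symm h2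
      exact Fin.succAbove_right_injective h3
    have := Finset.card_le_card_of_injOn Φ (fun y _ => hmaps y) hinjΦ
    simpa using this
  have hbadsub : Rfin ∩ V0 ⊆ insert z0 (F.image ev) := by
    intro y hy
    rw [Finset.mem_inter] at hy
    obtain ⟨hyR, hyV⟩ := hy
    rw [hR_def, Finset.mem_filter] at hyR
    rw [hV_def, Finset.mem_insert] at hyV
    rcases hyV with rfl | hyV
    · exact Finset.mem_insert_self _ _
    · obtain ⟨k, -, rfl⟩ := Finset.mem_image.1 hyV
      have hyP := hyR.2
      apply Finset.mem_insert_of_mem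
      refine Finset.mem_image.2 ⟨k, ?_, rfl⟩
      by_cases hxf : x = f x
      · exfalso
        obtain ⟨i, hik⟩ := exists_ne k
        apply hyP i
        rw [he_def, hc_def]
        simp only [if_neg hik, if_pos hxf]
      · have h1 := hyP k
        rw [he_def, hc_def] at h1
        simp only [if_pos rfl, if_neg hxf] at h1
        rw [hF_def, Finset.mem_filter]
        refine ⟨Finset.mem_univ _, ?_⟩
        by_contra hk
        rw [if_neg hk] at h1
        exact h1 rfl
  have hbadcard : (Rfin ∩ V0).card ≤ 1 + F.card := by
    have h1 := Finset.card_le_card hbadsub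
    have h2 := Finset.card_insert_le z0 (F.image ev)
    have h3 := Finset.card_image_le (f := ev) (s := F)
    omega
  have hBF : B.card + F.card ≤ n := by
    have hdisj : Disjoint B (F.image a) := by
      rw [Finset.disjoint_left]
      intro y hyB hyF
      obtain ⟨k, -, rfl⟩ := Finset.mem_image.1 hyF
      rw [hB_def, Finset.mem_sdiff] at hyB
      exact hyB.2 (Finset.mem_insert_of_mem (ha_mem k))
    have hsub : B ∪ F.image a ⊆ A.image f := by
      intro y hy
      rcases Finset.mem_union.1 hy with hy | hy
      · rw [hB_def, Finset.mem_sdiff] at hy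
        exact hy.1
      · obtain ⟨k, hk, rfl⟩ := Finset.mem_image.1 hy
        rw [hF_def, Finset.mem_filter] at hk
        exact hk.2
    have h1 : (B ∪ F.image a).card = B.card + (F.image a).card :=
      Finset.card_union_of_disjoint hdisj
    have h2 : (F.image a).card = F.card := Finset.card_image_of_injective F ha_inj
    have h3 := Finset.card_le_card hsub
    have h4 := Finset.card_image_le (f := f) (s := A)
    omega
  have hR'B : B.card ≤ R'.card := by
    have h1 : R'.card = Rfin.card - (Rfin ∩ V0).card := by
      rw [hR'_def, ← Finset.sdiff_inter_self_left Rfin V0,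
        Finset.card_sdiff_of_subset Finset.inter_subset_left]
    have h5 : n + 1 ≤ Rfin.card := le_trans hcard1 hRcard
    omega
  have hembn : Nonempty ({y // y ∈ B} ↪ {y // y ∈ R'}) := by
    apply Function.Embedding.nonempty_of_card_le
    simpa [Fintype.card_coe] using hR'B
  obtain ⟨emb⟩ := hembn
  obtain ⟨w, hw_def⟩ : ∃ w : (Fin n → Fin q) → (Fin n → Fin q),
      w = fun y => if h : y ∈ B then ((emb ⟨y, h⟩ : {z // z ∈ R'}) : Fin n → Fin q) else z0 := ⟨_, rfl⟩
  have hw_eq : ∀ y (h : y ∈ B), w y = ((emb ⟨y, h⟩ : {z // z ∈ R'}) : Fin n → Fin q) :=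
    fun y h => by rw [hw_def]; exact dif_pos h
  have hw_mem : ∀ y (h : y ∈ B), w y ∈ R' := by
    intro y h
    rw [hw_eq y h]
    exact (emb ⟨y, h⟩).2
  have hw_inj : Set.InjOn w B := by
    intro y1 h1 y2 h2 hEq
    rw [hw_eq y1 h1, hw_eq y2 h2] at hEq
    have := emb.injective (Subtype.ext hEq)
    exact congrArg Subtype.val this
  -- the map v and the pattern set T
  obtain ⟨v, hv_def⟩ : ∃ v : (Fin n → Fin q) → (Fin n → Fin q),
      v = fun y => if y = x then z0 else if h : y ∈ A then ev (idx y h)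
        else if y ∈ B then w y else c := ⟨_, rfl⟩
  obtain ⟨T, hT_def⟩ : ∃ T : Finset (Fin n → Fin q),
      T = insert x (insert (f x) (A ∪ A.image f)) := ⟨_, rfl⟩
  have hv_x : v x = z0 := by rw [hv_def]; simp
  have hv_a : ∀ y (h : y ∈ A), v y = ev (idx y h) := by
    intro y h
    have hyx : y ≠ x := fun e => hxA (e ▸ h)
    rw [hv_def]
    simp only [if_neg hyx, dif_pos h]
  have hv_B : ∀ y (h : y ∈ B), v y = w y := by
    intro y h
    rw [hB_def, Finset.mem_sdiff, Finset.mem_insert, not_or] at h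
    rw [hv_def]
    simp only [if_neg h.2.1, dif_neg h.2.2]
    rw [if_pos]
    rw [hB_def, Finset.mem_sdiff, Finset.mem_insert, not_or]
    exact h
  have hfxB : f x ∉ B := by
    rw [hB_def, Finset.mem_sdiff]
    intro h
    exact hfxI h.1
  have hv_fx : ∀ i, v (f x) i = c i := by
    intro i
    by_cases hxf : x = f x
    · conv_lhs => rw [← hxf]
      rw [hv_x, hz_def, hc_def]
      simp only [if_pos hxf]
    · have h1 : f x ≠ x := Ne.symm hxf
      rw [hv_def]
      simp only [if_neg h1, dif_neg hfxA, if_neg hfxB]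
  -- the key inequality
  have hkey : ∀ j i, v (f (a j)) i ≠ c i := by
    intro j i
    have hmem : f (a j) ∈ A.image f := Finset.mem_image_of_mem f (ha_mem j)
    by_cases hA' : f (a j) ∈ A
    · have hxf : x ≠ f x := by
        rcases hpat with h | h
        · exact h
        · exact absurd hmem (Finset.disjoint_left.1 h hA')
      rw [hv_a _ hA']
      have hak : a (idx (f (a j)) hA') ∈ A.image f := by rw [ha_idx]; exact hmem
      rw [he_def, hc_def]
      simp only [if_neg hxf]
      by_cases hik : i = idx (f (a j)) hA'
      · subst hik
        rw [if_pos rfl, if_pos hak]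
        exact hol.2.2
      · rw [if_neg hik]
        split
        · exact hol.2.1
        · exact hol.1
    · have hB' : f (a j) ∈ B := by
        rw [hB_def, Finset.mem_sdiff, Finset.mem_insert, not_or]
        exact ⟨hmem, fun e => hxI (e ▸ hmem), hA'⟩
      rw [hv_B _ hB']
      have h2 := hw_mem _ hB'
      rw [hR'_def, Finset.mem_sdiff, hR_def, Finset.mem_filter] at h2
      exact h2.1.2 i
  -- classification of elements of T
  have hclass : ∀ y ∈ T, (y = x ∧ v y = z0) ∨ (∃ h : y ∈ A, v y = ev (idx y h)) ∨
      (y ∈ B ∧ v y = w y) ∨ (y = f x ∧ x ≠ f x ∧ v y = c) := by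
    intro y hy
    by_cases h0 : y = x
    · exact Or.inl ⟨h0, by rw [h0, hv_x]⟩
    by_cases h1 : y ∈ A
    · exact Or.inr (Or.inl ⟨h1, hv_a y h1⟩)
    by_cases h2 : y ∈ B
    · exact Or.inr (Or.inr (Or.inl ⟨h2, hv_B y h2⟩))
    · refine Or.inr (Or.inr (Or.inr ?_))
      have hyfx : y = f x := by
        rw [hT_def, Finset.mem_insert, Finset.mem_insert, Finset.mem_union] at hy
        rcases hy with h | h | h | h
        · exact absurd h h0
        · exact h
        · exact absurd h h1
        · exfalso
          apply h2
          rw [hB_def, Finset.mem_sdiff, Finset.mem_insert, not_or]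
          exact ⟨h, h0, h1⟩
      have hxf : x ≠ f x := fun e => h0 (hyfx.trans e.symm)
      refine ⟨hyfx, hxf, ?_⟩
      rw [hv_def]
      simp only [if_neg h0, dif_neg h1, if_neg h2]
  -- distinctness of value classes
  have hze : ∀ k, z0 ≠ ev k := by
    intro k heq
    have h2 := congrFun heq k
    rw [hz_def, he_def] at h2
    simp at h2
    exact hol.1 h2
  have hnV : ∀ y (h : y ∈ B), w y ∉ V0 := by
    intro y h
    have h2 := hw_mem y h
    rw [hR'_def, Finset.mem_sdiff] at h2
    exact h2.2
  have hzw : ∀ y (h : y ∈ B), z0 ≠ w y := by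
    intro y h heq
    exact hnV y h (heq ▸ (by rw [hV_def]; exact Finset.mem_insert_self _ _))
  have hew : ∀ k y (h : y ∈ B), ev k ≠ w y := by
    intro k y h heq
    apply hnV y h
    rw [← heq, hV_def]
    exact Finset.mem_insert_of_mem (Finset.mem_image.2 ⟨k, Finset.mem_univ _, rfl⟩)
  have hzc : x ≠ f x → z0 ≠ c := by
    intro hxf heq
    exact hc_ne_o hxf i0 (by rw [← heq, hz_def])
  have hec : x ≠ f x → ∀ k, ev k ≠ c := by
    intro hxf k heq
    obtain ⟨i, hik⟩ := exists_ne k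
    have h2 := congrFun heq i
    rw [he_def] at h2
    simp only [if_neg hik] at h2
    exact hc_ne_o hxf i h2.symm
  have hwB : ∀ y (h : y ∈ B), ∀ i, w y i ≠ c i := by
    intro y h i
    have h2 := hw_mem y h
    rw [hR'_def, Finset.mem_sdiff, hR_def, Finset.mem_filter] at h2
    exact h2.1.2 i
  have hwc : ∀ y (h : y ∈ B), w y ≠ c := by
    intro y h heq
    exact hwB y h i0 (congrFun heq i0)
  have hee : ∀ k l, ev k = ev l → k = l := by
    intro k l heq
    by_contra hkl
    have h2 := congrFun heq k
    rw [he_def] at h2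
    simp [hkl] at h2
    exact hol.1 h2.symm
  -- injectivity of v on T
  have hinj : Set.InjOn v T := by
    intro y1 hy1 y2 hy2 hEq
    rcases hclass y1 (by exact_mod_cast hy1) with ⟨rfl, hv1⟩ | ⟨h1, hv1⟩ | ⟨h1, hv1⟩ |
        ⟨rfl, hxf1, hv1⟩ <;>
      rcases hclass y2 (by exact_mod_cast hy2) with ⟨rfl, hv2⟩ | ⟨h2, hv2⟩ | ⟨h2, hv2⟩ |
        ⟨rfl, hxf2, hv2⟩
    · rfl
    · exfalso; apply hze (idx y2 h2); rw [← hv1, hEq, hv2]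
    · exfalso; apply hzw y2 h2; rw [← hv1, hEq, hv2]
    · exfalso; apply hzc hxf2; rw [← hv1, hEq, hv2]
    · exfalso; apply hze (idx y1 h1); rw [← hv2, ← hEq, hv1]
    · have hkl := hee _ _ ((hv1.symm.trans hEq).trans hv2)
      rw [← ha_idx y1 h1, ← ha_idx y2 h2, hkl]
    · exfalso; apply hew (idx y1 h1) y2 h2; rw [← hv1, hEq, hv2]
    · exfalso; apply hec hxf2 (idx y1 h1); rw [← hv1, hEq, hv2]
    · exfalso; apply hzw y1 h1; rw [← hv2, ← hEq, hv1]
    · exfalso; apply hew (idx y2 h2) y1 h1; rw [← hv2, ← hEq, hv1]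
    · exact hw_inj h1 h2 ((hv1.symm.trans hEq).trans hv2)
    · exfalso; apply hwc y1 h1; rw [← hv1, hEq, hv2]
    · exfalso; apply hzc hxf1; rw [← hv2, ← hEq, hv1]
    · exfalso; apply hec hxf1 (idx y2 h2); rw [← hv2, ← hEq, hv1]
    · exfalso; apply hwc y2 h2; rw [← hv2, ← hEq, hv1]
    · rfl
  -- memberships in T
  have hxT : x ∈ T := by rw [hT_def]; exact Finset.mem_insert_self _ _
  have hfxT : f x ∈ T := by
    rw [hT_def]; exact Finset.mem_insert_of_mem (Finset.mem_insert_self _ _)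
  have haT : ∀ j, a j ∈ T := fun j => by
    rw [hT_def]
    exact Finset.mem_insert_of_mem (Finset.mem_insert_of_mem
      (Finset.mem_union_left _ (ha_mem j)))
  have hfaT : ∀ j, f (a j) ∈ T := fun j => by
    rw [hT_def]
    exact Finset.mem_insert_of_mem (Finset.mem_insert_of_mem
      (Finset.mem_union_right _ (Finset.mem_image_of_mem f (ha_mem j))))
  obtain ⟨π, hπ⟩ := exists_perm_extend T v hinj
  refine ⟨π, fun i j => ⟨π x, π (a j), ?_, ?_⟩⟩
  · intro k hk
    rw [hπ x hxT, hπ _ (haT j), hv_x, hv_a _ (ha_mem j), hidx_a j (ha_mem j), hz_def, he_def]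
    simp [hk]
  · show π (f (π.symm (π x))) i ≠ π (f (π.symm (π (a j)))) i
    rw [Equiv.symm_apply_apply, Equiv.symm_apply_apply, hπ _ hfxT, hπ _ (hfaT j)]
    intro hcontra
    exact hkey j i (hcontra.symm.trans (hv_fx i))
end

section
/- Let f : Q^n → Q^n. If f has at least n limit cycles of length at least 3 (i.e., n disjoint periodic orbits each of length ≥ 3), then there exists h isomorphic to f whose interaction graph is the complete digraph K_n. -/
open Finset

lemma exists_perm_map {α : Type*} [Fintype α] [DecidableEq α] {β : Type*}
    (s t : β → α) (hs : Function.Injective s) (ht : Function.Injective t) :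
    ∃ π : Equiv.Perm α, ∀ b, π (s b) = t b := by
  classical
  let e : {x // x ∈ Set.range s} ≃ {x // x ∈ Set.range t} :=
    (Equiv.ofInjective s hs).symm.trans (Equiv.ofInjective t ht)
  refine ⟨e.extendSubtype, fun b => ?_⟩
  have hb : s b ∈ Set.range s := ⟨b, rfl⟩
  rw [Equiv.extendSubtype_apply_of_mem e (s b) hb]
  have h1 : (Equiv.ofInjective s hs).symm ⟨s b, hb⟩ = b := by
    rw [Equiv.symm_apply_eq]; rfl
  simp only [e, Equiv.trans_apply, h1]
  rfl

lemma source_inj {n q : ℕ} (f : (Fin n → Fin q) → (Fin n → Fin q))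
    (a : Fin n → (Fin n → Fin q))
    (ha : ∀ m : Fin n, ∃ p, 3 ≤ p ∧ f^[p] (a m) = a m ∧
      ∀ t, 0 < t → t < p → f^[t] (a m) ≠ a m)
    (hdisj : ∀ m m' : Fin n, m ≠ m' → ∀ s t : ℕ, f^[s] (a m) ≠ f^[t] (a m')) :
    Function.Injective (fun p : Fin n × Fin 3 => f^[(p.2 : ℕ)] (a p.1)) := by
  have key : ∀ j, ∀ s r : ℕ, s < r → r < 3 → f^[s] (a j) ≠ f^[r] (a j) := by
    intro j s r hsr hr3 heq
    obtain ⟨p, hp3, hfix, hmin⟩ := ha j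
    have h1 : f^[p - r + r] (a j) = a j := by
      rw [Nat.sub_add_cancel (by omega)]; exact hfix
    have h2 : f^[p - r + s] (a j) = a j := by
      rw [Function.iterate_add_apply] at h1 ⊢
      rw [heq]; exact h1
    exact hmin (p - r + s) (by omega) (by omega) h2
  rintro ⟨j, t⟩ ⟨j', t'⟩ h
  simp only at h
  rcases eq_or_ne j j' with rfl | hjj
  · suffices hteq : (t : ℕ) = (t' : ℕ) by
      simp [Prod.ext_iff, Fin.ext_iff, hteq]
    rcases lt_trichotomy (t : ℕ) (t' : ℕ) with hlt | he | hgt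
    · exact absurd h (key j t t' hlt t'.isLt)
    · exact he
    · exact absurd h.symm (key j t' t hgt t.isLt)
  · exact absurd h (hdisj j j' hjj _ _)

lemma build {n q : ℕ} (f : (Fin n → Fin q) → (Fin n → Fin q))
    (a : Fin n → (Fin n → Fin q))
    (ha : ∀ m : Fin n, ∃ p, 3 ≤ p ∧ f^[p] (a m) = a m ∧
      ∀ t, 0 < t → t < p → f^[t] (a m) ≠ a m)
    (hdisj : ∀ m m' : Fin n, m ≠ m' → ∀ s t : ℕ, f^[s] (a m) ≠ f^[t] (a m'))
    (u v w : Fin n → (Fin n → Fin q))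
    (uinj : Function.Injective u) (vinj : Function.Injective v)
    (winj : Function.Injective w)
    (huv2 : ∀ j j', u j ≠ v j') (huw2 : ∀ j j', u j ≠ w j')
    (hvw2 : ∀ j j', v j ≠ w j')
    (huv : ∀ j k, k ≠ j → u j k = v j k) (hvw : ∀ j i, v j i ≠ w j i) :
    ∃ π : Equiv.Perm (Fin n → Fin q),
      ∀ i j : Fin n, Depends (fun y => π (f (π.symm y))) j i := by
  classical
  have hS := source_inj f a ha hdisj
  have hT : Function.Injective (fun p : Fin n × Fin 3 => ![u, v, w] p.2 p.1) := by
    rintro ⟨j, t⟩ ⟨j', t'⟩ h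
    have m0 : ∀ (hh : (0:ℕ) < 3), (![u,v,w] : Fin 3 → _) ⟨0, hh⟩ = u := fun _ => rfl
    have m1 : ∀ (hh : (1:ℕ) < 3), (![u,v,w] : Fin 3 → _) ⟨1, hh⟩ = v := fun _ => rfl
    have m2 : ∀ (hh : (2:ℕ) < 3), (![u,v,w] : Fin 3 → _) ⟨2, hh⟩ = w := fun _ => rfl
    fin_cases t <;> fin_cases t' <;>
      simp only [m0, m1, m2, Prod.mk.injEq, Fin.mk.injEq] at h ⊢ <;>
      first
        | exact ⟨uinj h, trivial⟩
        | exact ⟨vinj h, trivial⟩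
        | exact ⟨winj h, trivial⟩
        | exact absurd h (huv2 _ _)
        | exact absurd h (huw2 _ _)
        | exact absurd h (hvw2 _ _)
        | exact absurd h.symm (huv2 _ _)
        | exact absurd h.symm (huw2 _ _)
        | exact absurd h.symm (hvw2 _ _)
  obtain ⟨π, hπ⟩ := exists_perm_map _ _ hS hT
  refine ⟨π, fun i j => ?_⟩
  have h0 : π (a j) = u j := by simpa using hπ (j, 0)
  have h1 : π (f (a j)) = v j := by simpa using hπ (j, 1)
  have h2 : π (f (f (a j))) = w j := by
    have := hπ (j, 2)
    simp only [show ((2 : Fin 3) : ℕ) = 2 from rfl] at this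
    simpa [Function.iterate_succ_apply] using this
  refine ⟨u j, v j, fun k hk => huv j k hk, ?_⟩
  have e0 : π.symm (u j) = a j := by rw [← h0, Equiv.symm_apply_apply]
  have e1 : π.symm (v j) = f (a j) := by rw [← h1, Equiv.symm_apply_apply]
  simp only [e0, e1, h1, h2]
  exact hvw j i

theorem complete_of_many_limit_cycles {n q : ℕ}
    (f : (Fin n → Fin q) → (Fin n → Fin q))
    (a : Fin n → (Fin n → Fin q))
    -- each `a m` is a periodic point whose minimal period (the limit cycle length) is ≥ 3
    (ha : ∀ m : Fin n, ∃ p, 3 ≤ p ∧ f^[p] (a m) = a m ∧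
      ∀ t, 0 < t → t < p → f^[t] (a m) ≠ a m)
    -- the limit cycles (orbits) are pairwise distinct/disjoint
    (hdisj : ∀ m m' : Fin n, m ≠ m' → ∀ s t : ℕ, f^[s] (a m) ≠ f^[t] (a m')) :
    ∃ π : Equiv.Perm (Fin n → Fin q),
      ∀ i j : Fin n, Depends (fun y => π (f (π.symm y))) j i := by
  classical
  rcases Nat.eq_zero_or_pos n with hn0 | hn
  · subst hn0
    exact ⟨1, fun i => i.elim0⟩
  have hcard : 3 * n ≤ q ^ n := by
    have := Fintype.card_le_of_injective _ (source_inj f a ha hdisj)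
    simpa [Fintype.card_prod, Fintype.card_fin, Fintype.card_fun, mul_comm] using this
  have hq2 : 2 ≤ q := by
    by_contra hq
    have : q = 0 ∨ q = 1 := by omega
    rcases this with rfl | rfl
    · rw [Nat.zero_pow (by omega)] at hcard; omega
    · rw [one_pow] at hcard; omega
  by_cases hq3 : 3 ≤ q
  · by_cases hn2 : 2 ≤ n
    · -- q ≥ 3, n ≥ 2 : construction A
      have hnt : Nontrivial (Fin n) := Fin.nontrivial_iff_two_le.mpr hn2
      set z0 : Fin q := ⟨0, by omega⟩ with hz0
      set z1 : Fin q := ⟨1, by omega⟩ with hz1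
      set z2 : Fin q := ⟨2, by omega⟩ with hz2
      have h01 : z0 ≠ z1 := by simp [hz0, hz1, Fin.ext_iff]
      have h02 : z0 ≠ z2 := by simp [hz0, hz2, Fin.ext_iff]
      have h12 : z1 ≠ z2 := by simp [hz1, hz2, Fin.ext_iff]
      refine build f a ha hdisj
        (fun j k => if k = j then z2 else z0)
        (fun j k => if k = j then z1 else z0)
        (fun j k => if k = j then z2 else z1)
        ?_ ?_ ?_ ?_ ?_ ?_ ?_ ?_
      · intro j j' h
        by_contra hne
        have hc := congrFun h j
        simp only [if_pos rfl, if_neg hne] at hc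
        exact h02 hc.symm
      · intro j j' h
        by_contra hne
        have hc := congrFun h j
        simp only [if_pos rfl, if_neg hne] at hc
        exact h01 hc.symm
      · intro j j' h
        by_contra hne
        have hc := congrFun h j
        simp only [if_pos rfl, if_neg hne] at hc
        exact h12 hc.symm
      · intro j j' h
        have hc := congrFun h j
        rcases eq_or_ne j j' with rfl | hne
        · simp only [if_pos rfl] at hc
          exact h12 hc.symm
        · simp only [if_pos rfl, if_neg hne] at hc
          exact h02 hc.symm
      · intro j j' h
        rcases eq_or_ne j' j with rfl | hne
        · obtain ⟨k, hk⟩ := exists_ne j'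
          have hc := congrFun h k
          simp only [if_neg hk] at hc
          exact h01 hc
        · have hc := congrFun h j'
          simp only [if_pos rfl, if_neg hne] at hc
          exact h02 hc
      · intro j j' h
        have hc := congrFun h j'
        rcases eq_or_ne j' j with rfl | hne
        · simp only [if_pos rfl] at hc
          exact h12 hc
        · simp only [if_pos rfl, if_neg hne] at hc
          exact h02 hc
      · intro j k hk
        simp [if_neg hk]
      · intro j i
        rcases eq_or_ne i j with rfl | hne
        · simp only [if_pos rfl]
          exact h12
        · simp only [if_neg hne]
          exact h01
    · -- q ≥ 3, n = 1 : construction C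
      have hn1 : n = 1 := by omega
      subst hn1
      set z0 : Fin q := ⟨0, by omega⟩ with hz0
      set z1 : Fin q := ⟨1, by omega⟩ with hz1
      set z2 : Fin q := ⟨2, by omega⟩ with hz2
      have h01 : z0 ≠ z1 := by simp [hz0, hz1, Fin.ext_iff]
      have h02 : z0 ≠ z2 := by simp [hz0, hz2, Fin.ext_iff]
      have h12 : z1 ≠ z2 := by simp [hz1, hz2, Fin.ext_iff]
      refine build f a ha hdisj
        (fun _ _ => z0) (fun _ _ => z1) (fun _ _ => z2)
        ?_ ?_ ?_ ?_ ?_ ?_ ?_ ?_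
      · intro j j' _; exact Subsingleton.elim j j'
      · intro j j' _; exact Subsingleton.elim j j'
      · intro j j' _; exact Subsingleton.elim j j'
      · intro j j' h; exact h01 (congrFun h 0)
      · intro j j' h; exact h02 (congrFun h 0)
      · intro j j' h; exact h12 (congrFun h 0)
      · intro j k hk; exact absurd (Subsingleton.elim k j) hk
      · intro j i; exact h12
  · -- q = 2 (2 ≤ q < 3), hence n ≥ 4 : construction B
    have hq : q = 2 := by omega
    have hn4 : 4 ≤ n := by
      by_contra hlt
      have : n = 1 ∨ n = 2 ∨ n = 3 := by omega
      subst hq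
      rcases this with rfl | rfl | rfl <;> norm_num at hcard
    set z0 : Fin q := ⟨0, by omega⟩ with hz0
    set z1 : Fin q := ⟨1, by omega⟩ with hz1
    have h01 : z0 ≠ z1 := by simp [hz0, hz1, Fin.ext_iff]
    set p : Fin n → Fin n := fun j => ⟨(j.val + 1) % n, Nat.mod_lt _ (by omega)⟩ with hp
    have hmod : ∀ m : ℕ, m < n → (m + 1) % n = if m + 1 = n then 0 else m + 1 := by
      intro m hm
      split_ifs with h
      · rw [h, Nat.mod_self]
      · exact Nat.mod_eq_of_lt (by omega)
    have hpne : ∀ j, p j ≠ j := by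
      intro j hj
      have hc := congrArg Fin.val hj
      simp only [hp] at hc
      rw [hmod _ j.isLt] at hc
      have := j.isLt
      split_ifs at hc <;> omega
    have hpinj : Function.Injective p := by
      intro j j' h
      have hc := congrArg Fin.val h
      simp only [hp] at hc
      rw [hmod _ j.isLt, hmod _ j'.isLt] at hc
      have h1 := j.isLt
      have h2 := j'.isLt
      apply Fin.ext
      split_ifs at hc <;> omega
    have hno2 : ∀ j j' : Fin n, j = p j' → j' = p j → False := by
      intro j j' h1 h2
      have hc1 := congrArg Fin.val h1
      have hc2 := congrArg Fin.val h2
      simp only [hp] at hc1 hc2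
      rw [hmod _ j'.isLt] at hc1
      rw [hmod _ j.isLt] at hc2
      have hj := j.isLt
      have hj' := j'.isLt
      split_ifs at hc1 hc2 <;> omega
    have havoid : ∀ j j' : Fin n, ∃ k, k ≠ j ∧ k ≠ p j ∧ k ≠ p j' := by
      intro j j'
      by_contra hcon
      push_neg at hcon
      have hsub : (Finset.univ : Finset (Fin n)) ⊆ {j, p j, p j'} := by
        intro k _
        simp only [Finset.mem_insert, Finset.mem_singleton]
        by_contra hk
        push_neg at hk
        exact hk.2.2 (hcon k hk.1 hk.2.1)
      have hle := Finset.card_le_card hsub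
      have h3 : ({j, p j, p j'} : Finset (Fin n)).card ≤ 3 := by
        apply le_trans (Finset.card_insert_le _ _)
        have := Finset.card_insert_le (p j) ({p j'} : Finset (Fin n))
        simp only [Finset.card_singleton] at this
        omega
      rw [Finset.card_univ, Fintype.card_fin] at hle
      omega
    refine build f a ha hdisj
      (fun j k => if k = j ∨ k = p j then z1 else z0)
      (fun j k => if k = p j then z1 else z0)
      (fun j k => if k = p j then z0 else z1)
      ?_ ?_ ?_ ?_ ?_ ?_ ?_ ?_
    · -- u injective
      intro j j' h
      by_contra hne
      have hne' : j' ≠ j := fun e => hne e.symm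
      have hc1 : (if j = j ∨ j = p j then z1 else z0)
          = (if j = j' ∨ j = p j' then z1 else z0) := congrFun h j
      have hc2 : (if j' = j ∨ j' = p j then z1 else z0)
          = (if j' = j' ∨ j' = p j' then z1 else z0) := congrFun h j'
      have hj : j = p j' := by
        by_contra hx
        rw [if_pos (Or.inl rfl), if_neg (fun hh => hh.elim hne hx)] at hc1
        exact h01 hc1.symm
      have hj' : j' = p j := by
        by_contra hx
        rw [if_pos (Or.inl rfl), if_neg (fun hh => hh.elim hne' hx)] at hc2
        exact h01 hc2
      exact hno2 j j' hj hj'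
    · -- v injective
      intro j j' h
      have hc : (if p j = p j then z1 else z0)
          = (if p j = p j' then z1 else z0) := congrFun h (p j)
      rw [if_pos rfl] at hc
      by_cases hpp : p j = p j'
      · exact hpinj hpp
      · rw [if_neg hpp] at hc
        exact absurd hc.symm h01
    · -- w injective
      intro j j' h
      have hc : (if p j = p j then z0 else z1)
          = (if p j = p j' then z0 else z1) := congrFun h (p j)
      rw [if_pos rfl] at hc
      by_cases hpp : p j = p j'
      · exact hpinj hpp
      · rw [if_neg hpp] at hc
        exact absurd hc h01
    · -- u j ≠ v j'
      intro j j' h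
      rcases eq_or_ne j (p j') with hj | hj
      · have hc : (if p j = j ∨ p j = p j then z1 else z0)
            = (if p j = p j' then z1 else z0) := congrFun h (p j)
        rw [if_pos (Or.inr rfl)] at hc
        by_cases hpp : p j = p j'
        · have hjj : j = j' := hpinj hpp
          rw [← hpp] at hj
          exact hpne j hj.symm
        · rw [if_neg hpp] at hc
          exact h01 hc.symm
      · have hc : (if j = j ∨ j = p j then z1 else z0)
            = (if j = p j' then z1 else z0) := congrFun h j
        rw [if_pos (Or.inl rfl), if_neg hj] at hc
        exact h01 hc.symm
    · -- u j ≠ w j'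
      intro j j' h
      obtain ⟨k, hk1, hk2, hk3⟩ := havoid j j'
      have hc : (if k = j ∨ k = p j then z1 else z0)
          = (if k = p j' then z0 else z1) := congrFun h k
      rw [if_neg (fun hh => hh.elim hk1 hk2), if_neg hk3] at hc
      exact h01 hc
    · -- v j ≠ w j'
      intro j j' h
      obtain ⟨k, hk1, hk2, hk3⟩ := havoid j j'
      have hc : (if k = p j then z1 else z0)
          = (if k = p j' then z0 else z1) := congrFun h k
      rw [if_neg hk2, if_neg hk3] at hc
      exact h01 hc
    · -- agreement off j
      intro j k hk
      show (if k = j ∨ k = p j then z1 else z0) = (if k = p j then z1 else z0)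
      by_cases hkp : k = p j
      · rw [if_pos (Or.inr hkp), if_pos hkp]
      · rw [if_neg (fun hh => hh.elim hk hkp), if_neg hkp]
    · -- v and w differ everywhere
      intro j i
      show (if i = p j then z1 else z0) ≠ (if i = p j then z0 else z1)
      by_cases hip : i = p j
      · rw [if_pos hip, if_pos hip]
        exact fun e => h01 e.symm
      · rw [if_neg hip, if_neg hip]
        exact h01
end

section
/- Let f : Q^n → Q^n with n ≥ 5 and f not constant. If f has an independent set A (a set with f(A) ∩ A = ∅) with |A| > n and |f(A)| = 1, then there exists h isomorphic to f whose interaction graph is K_n. -/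
open Finset

section Aux

variable {n q : ℕ}

def oV (hq : 2 ≤ q) : Fin q := ⟨0, by omega⟩
def lV (hq : 2 ≤ q) : Fin q := ⟨1, by omega⟩

lemma oV_ne_lV (hq : 2 ≤ q) : oV hq ≠ lV hq := by
  simp [oV, lV, Fin.ext_iff]

def NL (hq : 2 ≤ q) (x : Fin n → Fin q) : ℕ := #(univ.filter fun k => x k = lV hq)

def w0 (hq : 2 ≤ q) : Fin n → Fin q := fun _ => oV hq
def all1 (hq : 2 ≤ q) : Fin n → Fin q := fun _ => lV hq
def eV (hq : 2 ≤ q) (j : Fin n) : Fin n → Fin q := fun k => if k = j then lV hq else oV hq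
def uZ (hq : 2 ≤ q) : Fin n → Fin q := fun k => if (k : ℕ) < 2 then lV hq else oV hq
def vZ (hq : 2 ≤ q) : Fin n → Fin q := fun k => if (k : ℕ) < 2 then oV hq else lV hq

lemma NL_w0 (hq : 2 ≤ q) : NL hq (w0 (n := n) hq) = 0 := by
  simp [NL, w0, oV_ne_lV hq]

lemma NL_all1 (hq : 2 ≤ q) : NL hq (all1 (n := n) hq) = n := by
  simp [NL, all1]

lemma NL_eV (hq : 2 ≤ q) (j : Fin n) : NL hq (eV hq j) = 1 := by
  have : (univ.filter fun k => eV hq j k = lV hq) = {j} := by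
    ext k
    by_cases hk : k = j <;> simp [eV, hk, oV_ne_lV hq]
  simp [NL, this]

lemma filter_uZ (hn : 5 ≤ n) (hq : 2 ≤ q) :
    (univ.filter fun k => uZ (n := n) hq k = lV hq) =
      {(⟨0, by omega⟩ : Fin n), ⟨1, by omega⟩} := by
  ext k
  by_cases hk : (k : ℕ) < 2 <;>
    · simp [uZ, hk, oV_ne_lV hq, Fin.ext_iff]
      omega

lemma NL_uZ (hn : 5 ≤ n) (hq : 2 ≤ q) : NL hq (uZ (n := n) hq) = 2 := by
  rw [NL, filter_uZ hn hq]
  rw [card_pair (by simp [Fin.ext_iff])]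

lemma NL_vZ (hn : 5 ≤ n) (hq : 2 ≤ q) : NL hq (vZ (n := n) hq) = n - 2 := by
  have h : (univ.filter fun k => vZ (n := n) hq k = lV hq) =
      univ \ (univ.filter fun k => uZ (n := n) hq k = lV hq) := by
    ext k
    by_cases hk : (k : ℕ) < 2 <;> simp [uZ, vZ, hk, oV_ne_lV hq, (oV_ne_lV hq).symm] <;> try omega
  rw [NL, h, card_sdiff_of_subset (filter_subset _ _), filter_uZ hn hq, card_univ, Fintype.card_fin,
    card_pair (by simp [Fin.ext_iff])]

lemma ne_of_NL (hq : 2 ≤ q) {x y : Fin n → Fin q} (h : NL hq x ≠ NL hq y) : x ≠ y :=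
  fun hxy => h (by rw [hxy])

lemma eV_inj (hq : 2 ≤ q) {j j' : Fin n} (h : eV hq j = eV hq j') : j = j' := by
  by_contra hne
  have := congrFun h j
  simp [eV, hne] at this
  exact oV_ne_lV hq this.symm

end Aux
theorem complete_of_independent_set_image_one {n q : ℕ} (hn : 5 ≤ n) (hq : 2 ≤ q)
    (f : (Fin n → Fin q) → (Fin n → Fin q))
    (hconst : ¬ ∃ c, f = fun _ => c)
    (A : Finset (Fin n → Fin q))
    (hind : Disjoint (A.image f) A)
    (hcard : n < A.card) (himg : (A.image f).card = 1) :
    ∃ π : Equiv.Perm (Fin n → Fin q),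
      ∀ i j : Fin n, Depends (fun y => π (f (π.symm y))) j i := by
  classical
  obtain ⟨c, hc⟩ := Finset.card_eq_one.mp himg
  have hfA : ∀ a ∈ A, f a = c := by
    intro a ha
    have h1 : f a ∈ A.image f := mem_image_of_mem f ha
    rw [hc, mem_singleton] at h1
    exact h1
  have hcA : c ∉ A := by
    intro h
    have hcimg : c ∈ A.image f := by rw [hc]; exact mem_singleton_self c
    exact (disjoint_left.mp hind hcimg) h
  obtain ⟨z, hz⟩ : ∃ z, f z ≠ c := by
    by_contra h
    push_neg at h
    exact hconst ⟨c, funext h⟩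
  have hzA : z ∉ A := fun h => hz (hfA z h)
  have hcardB : n ≤ (A.erase (f z)).card := by
    have h1 := Finset.pred_card_le_card_erase (s := A) (a := f z)
    omega
  obtain ⟨B, hBsub, hBcard⟩ := Finset.exists_subset_card_eq hcardB
  set eB := B.equivFinOfCardEq hBcard with heB
  set a : Fin n → (Fin n → Fin q) := fun j => (eB.symm j : Fin n → Fin q) with ha
  have haB : ∀ j, a j ∈ B := fun j => (eB.symm j).2
  have hBA : ∀ x ∈ B, x ∈ A := fun x hx => (Finset.mem_erase.mp (hBsub hx)).2
  have hBfz : ∀ x ∈ B, x ≠ f z := fun x hx => (Finset.mem_erase.mp (hBsub hx)).1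
  have hBz : ∀ x ∈ B, x ≠ z := fun x hx h => hzA (h ▸ hBA x hx)
  have hBc : ∀ x ∈ B, x ≠ c := fun x hx h => hcA (h ▸ hBA x hx)
  have hczfz : c ≠ f z := fun h => hz h.symm
  have hzcf : ¬ (z = c ∧ z = f z) := fun ⟨h1, h2⟩ => hczfz (h1.symm.trans h2)
  set u : Fin n → Fin q := if z = c then w0 hq else if z = f z then all1 hq else uZ hq with hu
  set v : Fin n → Fin q := if z = f z then w0 hq else if z = c then all1 hq else vZ hq with hv
  have huv : ∀ i, u i ≠ v i := by
    intro i
    rw [hu, hv]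
    by_cases h1 : z = c
    · have h2 : ¬ z = f z := fun h2 => hzcf ⟨h1, h2⟩
      simp only [if_pos h1, if_neg h2]
      exact fun h => oV_ne_lV hq h
    · by_cases h2 : z = f z
      · simp only [if_neg h1, if_pos h2]
        exact fun h => oV_ne_lV hq h.symm
      · simp only [if_neg h1, if_neg h2]
        by_cases hk : (i : ℕ) < 2 <;>
          simp [uZ, vZ, hk, oV_ne_lV hq, (oV_ne_lV hq).symm]
  have hNu : NL hq u = if z = c then 0 else if z = f z then n else 2 := by
    rw [hu]; split_ifs
    · exact NL_w0 hq
    · exact NL_all1 hq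
    · exact NL_uZ hn hq
  have hNv : NL hq v = if z = f z then 0 else if z = c then n else n - 2 := by
    rw [hv]; split_ifs
    · exact NL_w0 hq
    · exact NL_all1 hq
    · exact NL_vZ hn hq
  have hu_ne_e : ∀ j, u ≠ eV hq j := by
    intro j
    apply ne_of_NL hq
    rw [hNu, NL_eV]
    split_ifs <;> omega
  have hv_ne_e : ∀ j, v ≠ eV hq j := by
    intro j
    apply ne_of_NL hq
    rw [hNv, NL_eV]
    split_ifs <;> omega
  have he_ne_w0 : ∀ j : Fin n, eV hq j ≠ w0 hq := fun j =>
    ne_of_NL hq (by rw [NL_eV, NL_w0]; omega)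
  have hu_ne_w0 : z ≠ c → u ≠ w0 hq := by
    intro h
    apply ne_of_NL hq
    rw [hNu, NL_w0]
    split_ifs with h1 h2
    · exact absurd h1 h
    · omega
    · omega
  have hv_ne_w0 : z ≠ f z → v ≠ w0 hq := by
    intro h
    apply ne_of_NL hq
    rw [hNv, NL_w0]
    split_ifs with h1 h2
    · exact absurd h1 h
    · omega
    · omega
  have hu_ne_v : u ≠ v := fun h => huv ⟨0, by omega⟩ (congrFun h _)
  set f0 : (Fin n → Fin q) → (Fin n → Fin q) := fun x =>
    if x = z then w0 hq else if x = c then u else if x = f z then v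
    else if hx : x ∈ B then eV hq (eB ⟨x, hx⟩) else x with hf0
  set s : Finset (Fin n → Fin q) := insert z (insert c (insert (f z) B)) with hs
  have hmem : ∀ x, x ∈ s ↔ (x = z ∨ x = c ∨ x = f z ∨ x ∈ B) := by
    intro x; simp [hs]
  have hf0z : f0 z = w0 hq := by simp only [hf0]; rw [if_pos trivial]
  have hf0c : f0 c = u := by
    by_cases h1 : z = c
    · simp only [hf0]
      rw [if_pos h1.symm, hu, if_pos h1]
    · simp only [hf0]
      rw [if_neg (Ne.symm h1), if_pos trivial]
  have hf0fz : f0 (f z) = v := by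
    by_cases h2 : z = f z
    · simp only [hf0]
      rw [if_pos h2.symm, hv, if_pos h2]
    · simp only [hf0]
      rw [if_neg (Ne.symm h2), if_neg hz, if_pos trivial]
  have hf0B : ∀ x (hx : x ∈ B), f0 x = eV hq (eB ⟨x, hx⟩) := by
    intro x hx
    simp only [hf0]
    rw [if_neg (hBz x hx), if_neg (hBc x hx), if_neg (hBfz x hx), dif_pos hx]
  have hf0a : ∀ j, f0 (a j) = eV hq j := by
    intro j
    rw [hf0B (a j) (haB j)]
    have h1 : (⟨a j, haB j⟩ : {x // x ∈ B}) = eB.symm j := Subtype.ext rfl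
    rw [h1, Equiv.apply_symm_apply]
  have hinj : Set.InjOn f0 (s : Set (Fin n → Fin q)) := by
    intro x hx y hy hxy
    rw [Finset.mem_coe, hmem] at hx hy
    rcases hx with hx | hx | hx | hx
    · rcases hy with hy | hy | hy | hy
      · rw [hx, hy]
      · rw [hx, hy] at hxy ⊢
        rw [hf0z, hf0c] at hxy
        by_cases h : z = c
        · exact h
        · exact absurd hxy.symm (hu_ne_w0 h)
      · rw [hx, hy] at hxy ⊢
        rw [hf0z, hf0fz] at hxy
        by_cases h : z = f z
        · exact h
        · exact absurd hxy.symm (hv_ne_w0 h)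
      · rw [hx] at hxy
        rw [hf0z, hf0B y hy] at hxy
        exact absurd hxy.symm (he_ne_w0 _)
    · rcases hy with hy | hy | hy | hy
      · rw [hx, hy] at hxy ⊢
        rw [hf0z, hf0c] at hxy
        by_cases h : z = c
        · exact h.symm
        · exact absurd hxy (hu_ne_w0 h)
      · rw [hx, hy]
      · rw [hx, hy] at hxy ⊢
        rw [hf0c, hf0fz] at hxy
        exact absurd hxy hu_ne_v
      · rw [hx] at hxy
        rw [hf0c, hf0B y hy] at hxy
        exact absurd hxy (hu_ne_e _)
    · rcases hy with hy | hy | hy | hy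
      · rw [hx, hy] at hxy ⊢
        rw [hf0z, hf0fz] at hxy
        by_cases h : z = f z
        · exact h.symm
        · exact absurd hxy (hv_ne_w0 h)
      · rw [hx, hy] at hxy ⊢
        rw [hf0c, hf0fz] at hxy
        exact absurd hxy.symm hu_ne_v
      · rw [hx, hy]
      · rw [hx] at hxy
        rw [hf0fz, hf0B y hy] at hxy
        exact absurd hxy (hv_ne_e _)
    · rcases hy with hy | hy | hy | hy
      · rw [hy] at hxy
        rw [hf0z, hf0B x hx] at hxy
        exact absurd hxy (he_ne_w0 _)
      · rw [hy] at hxy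
        rw [hf0c, hf0B x hx] at hxy
        exact absurd hxy.symm (hu_ne_e _)
      · rw [hy] at hxy
        rw [hf0fz, hf0B x hx] at hxy
        exact absurd hxy.symm (hv_ne_e _)
      · rw [hf0B x hx, hf0B y hy] at hxy
        have h1 := eV_inj hq hxy
        have h2 := eB.injective h1
        exact congrArg Subtype.val h2
  have hαt : Fintype.card (Fin n → Fin q) = #(univ : Finset (Fin n → Fin q)) :=
    card_univ.symm
  have hsub : s.image f0 ⊆ univ := subset_univ _
  obtain ⟨g, hg⟩ := Finset.exists_equiv_extend_of_card_eq hαt hsub hinj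
  set π : Equiv.Perm (Fin n → Fin q) :=
    g.trans (Equiv.subtypeUnivEquiv (fun x => mem_univ x)) with hπdef
  have hπ : ∀ x ∈ s, π x = f0 x := by
    intro x hx
    rw [hπdef]
    simpa [Equiv.subtypeUnivEquiv] using hg x hx
  have hzmem : z ∈ s := (hmem z).mpr (Or.inl rfl)
  have hcmem : c ∈ s := (hmem c).mpr (Or.inr (Or.inl rfl))
  have hfzmem : f z ∈ s := (hmem (f z)).mpr (Or.inr (Or.inr (Or.inl rfl)))
  have hamem : ∀ j, a j ∈ s := fun j => (hmem (a j)).mpr (Or.inr (Or.inr (Or.inr (haB j))))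
  refine ⟨π, fun i j => ⟨eV hq j, w0 hq, ?_, ?_⟩⟩
  · intro k hk
    simp [eV, w0, hk]
  · have h1 : π.symm (eV hq j) = a j := by
      rw [Equiv.symm_apply_eq, hπ (a j) (hamem j), hf0a j]
    have h2 : π.symm (w0 hq) = z := by
      rw [Equiv.symm_apply_eq, hπ z hzmem, hf0z]
    show π (f (π.symm (eV hq j))) i ≠ π (f (π.symm (w0 hq))) i
    rw [h1, h2, hfA (a j) (hBA _ (haB j)), hπ c hcmem, hf0c, hπ (f z) hfzmem, hf0fz]
    exact huv i
end

section
/- Let f : Q^n → Q^n with n ≥ 5. If f has an independent set A with |A| ≥ n + k and |f(A)| = 2k for some 1 ≤ k ≤ n, then there exists h isomorphic to f whose interaction graph is K_n. -/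
open Finset

lemma exists_perm_of_embeddings {X : Type*} [Fintype X] [DecidableEq X] {I : Type*}
    (e p : I → X) (he : Function.Injective e) (hp : Function.Injective p) :
    ∃ π : Equiv.Perm X, ∀ i, π (e i) = p i := by
  classical
  set F : X → X := fun x => if h : ∃ i, e i = x then p h.choose else x with hF
  have key : ∀ i, F (e i) = p i := by
    intro i
    have h : ∃ i', e i' = e i := ⟨i, rfl⟩
    have : e h.choose = e i := h.choose_spec
    simp only [hF, dif_pos h, he this]
  have hinj : Set.InjOn F (Set.range e) := by
    rintro x ⟨i, rfl⟩ y ⟨i', rfl⟩ hxy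
    rw [key, key] at hxy
    rw [hp hxy]
  have hmt : Set.MapsTo F (Set.range e) (Finset.univ : Finset X) := by
    intro x _; simp
  obtain ⟨g, hg⟩ := hmt.exists_equiv_extend_of_card_eq (by simp) hinj
  refine ⟨g.trans (Equiv.subtypeUnivEquiv fun x => mem_univ x), fun i => ?_⟩
  have := hg (e i) ⟨i, rfl⟩
  simpa [this] using key i

lemma nat_mul_le_of_add_le {a b n : ℕ} (h : a + b ≤ 2 * n) : a * b ≤ n * n := by
  nlinarith [sq_nonneg ((a:ℤ) - b), sq_nonneg ((a:ℤ) + b - 2*n)]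

lemma nat_sq_lt_two_pow {n : ℕ} (h : 5 ≤ n) : n * n < 2 ^ n := by
  induction n, h using Nat.le_induction with
  | base => norm_num
  | succ n hn ih =>
    have h1 : (n+1) * (n+1) ≤ 2 * (n * n) := by nlinarith
    calc (n+1) * (n+1) ≤ 2 * (n * n) := h1
    _ < 2 * 2 ^ n := by omega
    _ = 2 ^ (n+1) := by ring

lemma nat_three_mul_le {n : ℕ} (h : 5 ≤ n) : 3 * n ≤ 2 ^ (n - 1) := by
  induction n, h using Nat.le_induction with
  | base => norm_num
  | succ n hn ih =>
    have h2 : 2 ^ (n - 1) + 2 ^ (n-1) = 2 ^ ((n+1)-1) := by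
      have h3 : n - 1 + 1 = n := by omega
      have : 2 ^ (n-1) + 2^(n-1) = 2 ^ (n-1+1) := by ring
      rw [this, h3]; rfl
    omega

lemma exists_alloc : ∀ (k : ℕ) (cap : Fin k → ℕ) (n : ℕ), n ≤ ∑ t, cap t →
    ∃ d : Fin k → ℕ, (∀ t, d t ≤ cap t) ∧ ∑ t, d t = n := by
  intro k
  induction k with
  | zero =>
    intro cap n h
    simp at h
    exact ⟨fun t => 0, fun t => t.elim0, by simp [h]⟩
  | succ k ih =>
    intro cap n h
    rw [Fin.sum_univ_succ] at h
    obtain ⟨d', hd'le, hd'sum⟩ := ih (fun t => cap t.succ) (n - min n (cap 0))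
      (show n - min n (cap 0) ≤ ∑ t : Fin k, cap t.succ by omega)
    refine ⟨Fin.cons (min n (cap 0)) d', ?_, ?_⟩
    · intro t
      refine Fin.cases ?_ ?_ t
      · simp [Nat.min_le_right]
      · intro i; simp [hd'le i]
    · rw [Fin.sum_univ_succ]
      simp only [Fin.cons_zero, Fin.cons_succ]
      omega

lemma exists_block : ∀ (m : ℕ) (D : ℕ → ℕ) (j : ℕ), j < ∑ i ∈ Finset.range m, D i →
    ∃ t < m, (∑ i ∈ Finset.range t, D i) ≤ j ∧ j < (∑ i ∈ Finset.range t, D i) + D t := by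
  intro m
  induction m with
  | zero => intro D j h; simp at h
  | succ m ih =>
    intro D j h
    rw [Finset.sum_range_succ] at h
    by_cases hj : j < ∑ i ∈ Finset.range m, D i
    · obtain ⟨t, ht, h1, h2⟩ := ih D j hj
      exact ⟨t, by omega, h1, h2⟩
    · exact ⟨m, by omega, by omega, by omega⟩

lemma exists_shifts {W : Type*} [AddCommGroup W] [Fintype W] [DecidableEq W]
    {k : ℕ} (sz : Fin k → ℕ) (w : ∀ t, Fin (sz t) → W)
    (hw : ∀ t, Function.Injective (w t))
    (hb : ∀ m : Fin k, (∑ t ∈ univ.filter (fun t : Fin k => (t:ℕ) < (m:ℕ)), sz t) * sz m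
        < Fintype.card W) :
    ∃ z : Fin k → W, Function.Injective
      (fun x : Σ t, Fin (sz t) => z x.1 + w x.1 x.2) := by
  classical
  have main : ∀ m : ℕ, m ≤ k → ∃ z : Fin k → W,
      Set.InjOn (fun x : Σ t, Fin (sz t) => z x.1 + w x.1 x.2)
        {x | (x.1 : ℕ) < m} := by
    intro m
    induction m with
    | zero => exact fun _ => ⟨fun _ => 0, by simp [Set.InjOn]⟩
    | succ m ih =>
      intro hm1
      obtain ⟨z, hz⟩ := ih (by omega)
      set M : Fin k := ⟨m, by omega⟩ with hM
      set F := fun (z : Fin k → W) (x : Σ t, Fin (sz t)) => z x.1 + w x.1 x.2 with hF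
      set Pl : Finset W :=
        (univ.filter (fun x : Σ t, Fin (sz t) => (x.1 : ℕ) < m)).image (F z) with hPl
      set bad : Finset W := (Pl ×ˢ (univ : Finset (Fin (sz M)))).image
        (fun q => q.1 - w M q.2) with hbad
      have hcard : bad.card < Fintype.card W := by
        have h1 : bad.card ≤ Pl.card * sz M := by
          calc bad.card ≤ (Pl ×ˢ (univ : Finset (Fin (sz M)))).card :=
            Finset.card_image_le
          _ = Pl.card * sz M := by rw [Finset.card_product, Finset.card_univ, Fintype.card_fin]
        have h2 : Pl.card ≤ ∑ t ∈ univ.filter (fun t : Fin k => (t:ℕ) < (M:ℕ)), sz t := by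
          calc Pl.card ≤ (univ.filter (fun x : Σ t, Fin (sz t) => (x.1 : ℕ) < m)).card :=
            Finset.card_image_le
          _ = ∑ t ∈ univ.filter (fun t : Fin k => (t:ℕ) < (M:ℕ)), sz t := by
            have : (univ.filter (fun x : Σ t, Fin (sz t) => (x.1 : ℕ) < m))
                = (univ.filter (fun t : Fin k => (t:ℕ) < (M:ℕ))).sigma (fun t => univ) := by
              ext x; simp [Finset.mem_sigma, hM]
            rw [this, Finset.card_sigma]
            simp
        calc bad.card ≤ Pl.card * sz M := h1
        _ ≤ (∑ t ∈ univ.filter (fun t : Fin k => (t:ℕ) < (M:ℕ)), sz t) * sz M :=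
          Nat.mul_le_mul_right _ h2
        _ < Fintype.card W := hb M
      obtain ⟨ζ, hζ⟩ : ∃ ζ : W, ζ ∉ bad := by
        by_contra hc
        push_neg at hc
        have : (univ : Finset W) ⊆ bad := fun x _ => hc x
        have := Finset.card_le_card this
        rw [Finset.card_univ] at this
        omega
      refine ⟨Function.update z M ζ, ?_⟩
      have hsame : ∀ x : Σ t, Fin (sz t), (x.1 : ℕ) < m →
          F (Function.update z M ζ) x = F z x := by
        intro x hx
        have hne : x.1 ≠ M := fun h => by simp [h, hM] at hx
        simp [hF, Function.update_of_ne hne]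
      have hmem : ∀ x : Σ t, Fin (sz t), (x.1 : ℕ) < m → F z x ∈ Pl := by
        intro x hx
        exact Finset.mem_image_of_mem _ (by simp [hx])
      rintro x hx y hy hxy
      have hxy' : F (Function.update z M ζ) x = F (Function.update z M ζ) y := hxy
      clear hxy
      simp only [Set.mem_setOf_eq, Nat.lt_succ_iff_lt_or_eq] at hx hy
      have hMx : ∀ x : Σ t, Fin (sz t), (x.1 : ℕ) = m → x.1 = M :=
        fun x hx => Fin.ext hx
      rcases hx with hx | hx <;> rcases hy with hy | hy
      · exact hz hx hy (show F z x = F z y by rw [← hsame x hx, ← hsame y hy]; exact hxy')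
      · exfalso
        have h1 : F (Function.update z M ζ) x = F z x := hsame x hx
        have hyM : y.1 = M := hMx y hy
        have h2 : F (Function.update z M ζ) y = ζ + w M (hyM ▸ y.2) := by
          rcases y with ⟨t, v⟩
          simp only at hyM
          subst hyM
          simp [hF, Function.update_self]
        apply hζ
        rw [hbad]
        apply Finset.mem_image.2
        refine ⟨(F z x, hyM ▸ y.2), by simp [hmem x hx], ?_⟩
        have : ζ + w M (hyM ▸ y.2) = F z x := by rw [← h2, ← h1, hxy']
        simp [← this]
      · exfalso
        have h1 : F (Function.update z M ζ) y = F z y := hsame y hy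
        have hxM : x.1 = M := hMx x hx
        have h2 : F (Function.update z M ζ) x = ζ + w M (hxM ▸ x.2) := by
          rcases x with ⟨t, v⟩
          simp only at hxM
          subst hxM
          simp [hF, Function.update_self]
        apply hζ
        rw [hbad]
        apply Finset.mem_image.2
        refine ⟨(F z y, hxM ▸ x.2), by simp [hmem y hy], ?_⟩
        have : ζ + w M (hxM ▸ x.2) = F z y := by rw [← h2, ← h1, hxy']
        simp [← this]
      · have hxM : x.1 = M := hMx x hx
        have hyM : y.1 = M := hMx y hy
        rcases x with ⟨t, v⟩
        rcases y with ⟨t', v'⟩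
        simp only at hxM hyM
        subst hxM; subst hyM
        simp only [hF, Function.update_self] at hxy'
        have := hw M (add_left_cancel hxy')
        rw [this]
  obtain ⟨z, hz⟩ := main k le_rfl
  exact ⟨z, fun x y h => hz (x.1.isLt) (y.1.isLt) h⟩

def treePos (n σ d' v : ℕ) : Fin n → ZMod 2 :=
  fun i => if ((v = 1 ∨ 2 + d' ≤ v) ∧ (i : ℕ) = σ) ∨ (2 ≤ v ∧ (i : ℕ) = σ + v - 1)
    then 1 else 0

def IsC (d' v : ℕ) : Prop := v = 1 ∨ (2 ≤ v ∧ v < 2 + d')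

instance (d' v : ℕ) : Decidable (IsC d' v) := by unfold IsC; infer_instance

lemma treePos_ne_of_lt {n σ d d' v v' : ℕ} (hσ : σ + d ≤ n)
    (hv' : v' < d + 1) (hlt : v < v') :
    treePos n σ d' v ≠ treePos n σ d' v' := by
  intro heq
  rcases Nat.lt_or_ge 1 v' with h2 | h2
  · have hco : σ + v' - 1 < n := by omega
    have h1 : treePos n σ d' v' ⟨σ + v' - 1, hco⟩ = 1 := by
      unfold treePos; rw [if_pos (by first | omega | (simp only [Fin.val_mk, and_true, true_and, true_or, or_true, false_or, or_false, false_and, and_false] <;> omega))]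
    have h0 : treePos n σ d' v ⟨σ + v' - 1, hco⟩ = 0 := by
      unfold treePos; rw [if_neg (by first | omega | (simp only [Fin.val_mk, and_true, true_and, true_or, or_true, false_or, or_false, false_and, and_false] <;> omega))]
    rw [heq, h1] at h0
    exact one_ne_zero h0
  · have hv1 : v' = 1 := by omega
    have hv0 : v = 0 := by omega
    have hco : σ < n := by omega
    have h1 : treePos n σ d' v' ⟨σ, hco⟩ = 1 := by
      unfold treePos; rw [if_pos (by first | omega | (simp only [Fin.val_mk, and_true, true_and, true_or, or_true, false_or, or_false, false_and, and_false] <;> omega))]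
    have h0 : treePos n σ d' v ⟨σ, hco⟩ = 0 := by
      unfold treePos; rw [if_neg (by first | omega | (simp only [Fin.val_mk, and_true, true_and, true_or, or_true, false_or, or_false, false_and, and_false] <;> omega))]
    rw [heq, h1] at h0
    exact one_ne_zero h0

lemma treePos_inj {n σ d d' : ℕ} (hσ : σ + d ≤ n) {v v' : ℕ}
    (hv : v < d + 1) (hv' : v' < d + 1) (hne : v ≠ v') :
    treePos n σ d' v ≠ treePos n σ d' v' := by
  rcases Nat.lt_or_ge v v' with hlt | hge
  · exact treePos_ne_of_lt hσ hv' hlt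
  · exact (treePos_ne_of_lt hσ hv (by omega)).symm

lemma tree_edge {n σ d d' r : ℕ} (hr : r < d) (hσn : σ + d ≤ n) :
    ∃ v₁ v₂ : ℕ, v₁ < d + 1 ∧ v₂ < d + 1 ∧ ¬ IsC d' v₁ ∧ IsC d' v₂ ∧
      (∀ i : Fin n, (i : ℕ) ≠ σ + r → treePos n σ d' v₁ i = treePos n σ d' v₂ i) ∧
      treePos n σ d' v₁ ⟨σ + r, by omega⟩ ≠ treePos n σ d' v₂ ⟨σ + r, by omega⟩ := by
  rcases Nat.eq_zero_or_pos r with hr0 | hrpos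
  · subst hr0
    refine ⟨0, 1, by omega, by omega, by unfold IsC; omega, Or.inl rfl, ?_, ?_⟩
    · intro i hi
      unfold treePos
      rw [if_neg (by first | omega | (simp only [Fin.val_mk, and_true, true_and, true_or, or_true, false_or, or_false, false_and, and_false] <;> omega)), if_neg (by first | omega | (simp only [Fin.val_mk, and_true, true_and, true_or, or_true, false_or, or_false, false_and, and_false] <;> omega))]
    · unfold treePos
      rw [if_neg (by first | omega | (simp only [Fin.val_mk, and_true, true_and, true_or, or_true, false_or, or_false, false_and, and_false] <;> omega)), if_pos (by first | omega | (simp only [Fin.val_mk, and_true, true_and, true_or, or_true, false_or, or_false, false_and, and_false] <;> omega))]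
      exact zero_ne_one
  rcases Nat.lt_or_ge r (1 + d') with hrd | hrd
  · refine ⟨0, r + 1, by omega, by omega, by unfold IsC; omega,
      Or.inr ⟨by omega, by omega⟩, ?_, ?_⟩
    · intro i hi
      unfold treePos
      rw [if_neg (by first | omega | (simp only [Fin.val_mk, and_true, true_and, true_or, or_true, false_or, or_false, false_and, and_false] <;> omega)), if_neg (by first | omega | (simp only [Fin.val_mk, and_true, true_and, true_or, or_true, false_or, or_false, false_and, and_false] <;> omega))]
    · unfold treePos
      rw [if_neg (by first | omega | (simp only [Fin.val_mk, and_true, true_and, true_or, or_true, false_or, or_false, false_and, and_false] <;> omega)), if_pos (by first | omega | (simp only [Fin.val_mk, and_true, true_and, true_or, or_true, false_or, or_false, false_and, and_false] <;> omega))]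
      exact zero_ne_one
  · refine ⟨r + 1, 1, by omega, by omega, by unfold IsC; omega, Or.inl rfl, ?_, ?_⟩
    · intro i hi
      unfold treePos
      by_cases hiσ : (i : ℕ) = σ
      · rw [if_pos (by first | omega | (simp only [Fin.val_mk, and_true, true_and, true_or, or_true, false_or, or_false, false_and, and_false] <;> omega)), if_pos (by first | omega | (simp only [Fin.val_mk, and_true, true_and, true_or, or_true, false_or, or_false, false_and, and_false] <;> omega))]
      · rw [if_neg (by first | omega | (simp only [Fin.val_mk, and_true, true_and, true_or, or_true, false_or, or_false, false_and, and_false] <;> omega)), if_neg (by first | omega | (simp only [Fin.val_mk, and_true, true_and, true_or, or_true, false_or, or_false, false_and, and_false] <;> omega))]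
    · unfold treePos
      rw [if_pos (by first | omega | (simp only [Fin.val_mk, and_true, true_and, true_or, or_true, false_or, or_false, false_and, and_false] <;> omega)), if_neg (by first | omega | (simp only [Fin.val_mk, and_true, true_and, true_or, or_true, false_or, or_false, false_and, and_false] <;> omega))]
      exact one_ne_zero


lemma W0_card {n : ℕ} (h0n : 0 < n) :
    2 ^ (n - 1) ≤ (univ.filter (fun x : Fin n → ZMod 2 => x ⟨0, h0n⟩ = 0)).card := by
  classical
  set J : (Fin (n-1) → ZMod 2) → (Fin n → ZMod 2) :=
    fun y i => if h : (i : ℕ) = 0 then 0 else y ⟨(i:ℕ) - 1, by omega⟩ with hJ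
  have h1 : ∀ y, J y ∈ univ.filter (fun x : Fin n → ZMod 2 => x ⟨0, h0n⟩ = 0) := by
    intro y
    simp only [Finset.mem_filter, Finset.mem_univ, true_and, hJ]
    rw [dif_pos (by simp)]
  have h2 : Set.InjOn J (univ : Finset (Fin (n-1) → ZMod 2)) := by
    intro y _ y' _ h
    funext r
    have hr1 : (r : ℕ) + 1 < n := by omega
    have h3 := congrFun h ⟨(r : ℕ) + 1, hr1⟩
    simp only [hJ] at h3
    rw [dif_neg (by simp), dif_neg (by simp)] at h3
    simpa using h3
  calc 2 ^ (n-1) = (univ : Finset (Fin (n-1) → ZMod 2)).card := by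
        rw [Finset.card_univ, Fintype.card_fun]; simp [ZMod.card]
  _ ≤ _ := Finset.card_le_card_of_injOn J (fun y _ => h1 y) h2


lemma cidx_inj {d' a b : ℕ} (ha : IsC d' a) (hb : IsC d' b)
    (h : (if a = 1 then 0 else a - 1) = (if b = 1 then 0 else b - 1)) : a = b := by
  unfold IsC at ha hb
  split_ifs at h <;> omega

lemma bidx_inj {d' a b : ℕ} (ha : ¬ IsC d' a) (hb : ¬ IsC d' b)
    (h : (if a = 0 then 0 else a - 1 - d') = (if b = 0 then 0 else b - 1 - d')) : a = b := by
  unfold IsC at ha hb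
  split_ifs at h <;> omega

set_option maxHeartbeats 1600000 in
theorem complete_of_independent_set_image_2k {n q k : ℕ} (hn : 5 ≤ n) (hq : 2 ≤ q)
    (hk : 1 ≤ k) (hkn : k ≤ n)
    (f : (Fin n → Fin q) → (Fin n → Fin q))
    (A : Finset (Fin n → Fin q))
    (hind : Disjoint (A.image f) A)
    (hcard : n + k ≤ A.card) (himg : (A.image f).card = 2 * k) :
    ∃ π : Equiv.Perm (Fin n → Fin q),
      ∀ i j : Fin n, Depends (fun y => π (f (π.symm y))) j i := by
  classical
  have h0n : 0 < n := by omega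
  -- enumeration of the image B
  have hBcard : Fintype.card (Fin k × Bool) = Fintype.card ↥(A.image f) := by
    rw [Fintype.card_prod, Fintype.card_bool, Fintype.card_fin, Fintype.card_coe, himg]
    ring
  set eB := Fintype.equivOfCardEq hBcard with heB
  set bB : Fin k → (Fin n → Fin q) := fun t => ↑(eB (t, false)) with hbB
  set cB : Fin k → (Fin n → Fin q) := fun t => ↑(eB (t, true)) with hcB
  have hBCinj : Function.Injective (fun p : Fin k × Bool => (↑(eB p) : Fin n → Fin q)) :=
    fun p p' h => eB.injective (Subtype.ext h)
  have hbBmem : ∀ t, bB t ∈ A.image f := fun t => (eB (t, false)).2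
  have hcBmem : ∀ t, cB t ∈ A.image f := fun t => (eB (t, true)).2
  set Fb : Fin k → Finset (Fin n → Fin q) := fun t => A.filter (fun a => f a = bB t) with hFb
  set Fc : Fin k → Finset (Fin n → Fin q) := fun t => A.filter (fun a => f a = cB t) with hFc
  have hFbpos : ∀ t, 1 ≤ (Fb t).card := by
    intro t
    obtain ⟨a, ha, hfa⟩ := Finset.mem_image.1 (hbBmem t)
    have : a ∈ Fb t := Finset.mem_filter.2 ⟨ha, hfa⟩
    exact Finset.card_pos.2 ⟨a, this⟩
  have hFcpos : ∀ t, 1 ≤ (Fc t).card := by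
    intro t
    obtain ⟨a, ha, hfa⟩ := Finset.mem_image.1 (hcBmem t)
    exact Finset.card_pos.2 ⟨a, Finset.mem_filter.2 ⟨ha, hfa⟩⟩
  -- sum of fiber sizes
  have hsum : n + k ≤ ∑ t : Fin k, ((Fb t).card + (Fc t).card) := by
    have h1 : A.card = ∑ b ∈ A.image f, (A.filter fun a => f a = b).card :=
      Finset.card_eq_sum_card_image f A
    have h2 : ∑ b ∈ A.image f, (A.filter fun a => f a = b).card
        = ∑ b : ↥(A.image f), (A.filter fun a => f a = ↑b).card :=
      (Finset.sum_coe_sort (A.image f) (fun b => (A.filter fun a => f a = b).card)).symm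
    have h3 : ∑ b : ↥(A.image f), (A.filter fun a => f a = ↑b).card
        = ∑ x : Fin k × Bool, (A.filter fun a => f a = ↑(eB x)).card :=
      (Equiv.sum_comp eB _).symm
    have h4 : ∑ x : Fin k × Bool, (A.filter fun a => f a = ↑(eB x)).card
        = ∑ t : Fin k, ((Fb t).card + (Fc t).card) := by
      rw [Fintype.sum_prod_type]
      apply Finset.sum_congr rfl
      intro t _
      rw [Fintype.sum_bool]
      simp only [hFb, hFc, hbB, hcB]
      omega
    omega
  -- allocation of directions
  set cap : Fin k → ℕ := fun t => (Fb t).card + (Fc t).card - 1 with hcap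
  have hcapsum : n ≤ ∑ t, cap t := by
    have h5 : ∑ t : Fin k, (cap t + 1) = ∑ t : Fin k, ((Fb t).card + (Fc t).card) := by
      apply Finset.sum_congr rfl
      intro t _
      have := hFbpos t; have := hFcpos t
      simp only [hcap]
      omega
    rw [Finset.sum_add_distrib] at h5
    simp only [Finset.sum_const, Finset.card_univ, Fintype.card_fin, smul_eq_mul] at h5
    omega
  obtain ⟨d, hdcap, hdsum⟩ := exists_alloc k cap n hcapsum
  set d' : Fin k → ℕ := fun t => min (d t - 1) ((Fc t).card - 1) with hd'
  have hd'c : ∀ t, 1 + d' t ≤ (Fc t).card := by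
    intro t; have := hFcpos t
    simp only [hd']; omega
  have hd'b : ∀ t, d t ≤ (Fb t).card + d' t := by
    intro t
    have h1 := hdcap t
    have := hFbpos t; have := hFcpos t
    simp only [hcap] at h1
    simp only [hd']; omega
  -- blocks of directions
  set D : ℕ → ℕ := fun i => if h : i < k then d ⟨i, h⟩ else 0 with hD
  set σf : ℕ → ℕ := fun m => ∑ i ∈ Finset.range m, D i with hσf
  have hDd : ∀ t : Fin k, D ↑t = d t := by
    intro t
    simp only [hD, dif_pos t.isLt, Fin.eta]
  have hσn : σf k = n := by
    have h1 : ∑ i : Fin k, D ↑i = ∑ i ∈ Finset.range k, D i :=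
      Fin.sum_univ_eq_sum_range (fun i => D i) k
    have h2 : ∑ i : Fin k, D ↑i = ∑ t : Fin k, d t :=
      Finset.sum_congr rfl (fun t _ => hDd t)
    simp only [hσf]
    omega
  have hσblock : ∀ t : Fin k, σf ↑t + d t ≤ n := by
    intro t
    have h1 : σf ↑t + d t = σf (↑t + 1) := by
      simp only [hσf, Finset.sum_range_succ, hDd t]
    have h2 : σf (↑t + 1) ≤ σf k := by
      simp only [hσf]
      exact Finset.sum_le_sum_of_subset (Finset.range_subset_range.2 t.isLt)
    omega
  -- greedy placement of the trees
  set sz : Fin k → ℕ := fun t => d t + 1 with hsz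
  set wfun : ∀ t : Fin k, Fin (sz t) → (Fin n → ZMod 2) :=
    fun t v => treePos n (σf ↑t) (d' t) ↑v with hwfun
  have hwinj : ∀ t, Function.Injective (wfun t) := by
    intro t v v' h
    by_contra hne
    exact treePos_inj (hσblock t) v.isLt v'.isLt (fun hc => hne (Fin.ext hc)) h
  have hcardW : Fintype.card (Fin n → ZMod 2) = 2 ^ n := by
    rw [Fintype.card_fun]
    simp [ZMod.card]
  have hszsum : ∑ t, sz t = n + k := by
    simp only [hsz]
    rw [Finset.sum_add_distrib]
    simp only [Finset.sum_const, Finset.card_univ, Fintype.card_fin, smul_eq_mul, hdsum]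
    omega
  have hgb : ∀ M : Fin k,
      (∑ t ∈ univ.filter (fun t : Fin k => (t:ℕ) < (M:ℕ)), sz t) * sz M
        < Fintype.card (Fin n → ZMod 2) := by
    intro M
    have hMnot : M ∉ univ.filter (fun t : Fin k => (t:ℕ) < (M:ℕ)) := by simp
    have h1 : ∑ t ∈ insert M (univ.filter (fun t : Fin k => (t:ℕ) < (M:ℕ))), sz t
        ≤ ∑ t, sz t := Finset.sum_le_sum_of_subset (Finset.subset_univ _)
    rw [Finset.sum_insert hMnot] at h1
    have h2 : (∑ t ∈ univ.filter (fun t : Fin k => (t:ℕ) < (M:ℕ)), sz t) + sz M ≤ 2 * n := by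
      omega
    calc (∑ t ∈ univ.filter (fun t : Fin k => (t:ℕ) < (M:ℕ)), sz t) * sz M ≤ n * n :=
      nat_mul_le_of_add_le h2
    _ < 2 ^ n := nat_sq_lt_two_pow hn
    _ = Fintype.card (Fin n → ZMod 2) := hcardW.symm
  obtain ⟨z, hzinj⟩ := exists_shifts sz wfun hwinj hgb
  set posA : (Σ t : Fin k, Fin (sz t)) → (Fin n → ZMod 2) :=
    fun x => z x.1 + wfun x.1 x.2 with hposA
  -- image-side placement
  have hzmod : ∀ a : ZMod 2, a + a = 0 := by decide
  have hzmodne : ∀ a : ZMod 2, a ≠ a + 1 := by decide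
  have hzmod01 : (0 : ZMod 2) ≠ 1 := by decide
  set one : Fin n → ZMod 2 := fun _ => 1 with hone
  set rep : (Fin n → ZMod 2) → (Fin n → ZMod 2) :=
    fun x => if x ⟨0, h0n⟩ = 0 then x else x + one with hrep
  set P : Finset (Fin n → ZMod 2) := univ.image posA with hP
  have hPcard : P.card ≤ n + k := by
    calc P.card ≤ (univ : Finset (Σ t : Fin k, Fin (sz t))).card := Finset.card_image_le
    _ = Fintype.card (Σ t : Fin k, Fin (sz t)) := Finset.card_univ
    _ = ∑ t, sz t := by rw [Fintype.card_sigma]; simp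
    _ = n + k := hszsum
  set W₀ : Finset (Fin n → ZMod 2) := univ.filter (fun x => x ⟨0, h0n⟩ = 0) with hW₀
  have hW₀card : 2 ^ (n - 1) ≤ W₀.card := W0_card h0n
  set S : Finset (Fin n → ZMod 2) := W₀ \ (P.image rep) with hS
  have hScard : k ≤ S.card := by
    have h1 : W₀.card ≤ S.card + (P.image rep).card := Finset.card_le_card_sdiff_add_card
    have h2 : (P.image rep).card ≤ n + k :=
      le_trans Finset.card_image_le hPcard
    have h3 := nat_three_mul_le hn
    omega
  obtain ⟨T, hTS, hTcard⟩ := Finset.exists_subset_card_eq hScard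
  set ζ : Fin k → (Fin n → ZMod 2) :=
    fun t => ↑(T.equivFin.symm (Fin.cast hTcard.symm t)) with hζ
  have hζinj : Function.Injective ζ := by
    intro t t' h
    have := T.equivFin.symm.injective (Subtype.ext h)
    exact Fin.ext (by simpa [Fin.cast] using congrArg Fin.val this)
  have hζS : ∀ t, ζ t ∈ S := fun t => hTS (T.equivFin.symm (Fin.cast hTcard.symm t)).2
  have hζ0 : ∀ t, ζ t ⟨0, h0n⟩ = 0 := by
    intro t
    have := (Finset.mem_sdiff.1 (hζS t)).1
    simpa [hW₀] using this
  have hζP : ∀ t, ζ t ∉ P.image rep := fun t => (Finset.mem_sdiff.1 (hζS t)).2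
  set pB : Fin k × Bool → (Fin n → ZMod 2) :=
    fun p => if p.2 then ζ p.1 + one else ζ p.1 with hpB
  -- element assignment
  have hq0 : (0:ℕ) < q := by omega
  set fCe : Fin k → ℕ → (Fin n → Fin q) := fun t m =>
    if h : m < (Fc t).card then ↑((Fc t).equivFin.symm ⟨m, h⟩) else (fun _ => ⟨0, hq0⟩) with hfCe
  set fBe : Fin k → ℕ → (Fin n → Fin q) := fun t m =>
    if h : m < (Fb t).card then ↑((Fb t).equivFin.symm ⟨m, h⟩) else (fun _ => ⟨0, hq0⟩) with hfBe
  have hfCmem : ∀ t m, m < (Fc t).card → fCe t m ∈ Fc t := by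
    intro t m h
    simp only [hfCe, dif_pos h]
    exact ((Fc t).equivFin.symm ⟨m, h⟩).2
  have hfBmem : ∀ t m, m < (Fb t).card → fBe t m ∈ Fb t := by
    intro t m h
    simp only [hfBe, dif_pos h]
    exact ((Fb t).equivFin.symm ⟨m, h⟩).2
  have hfCinj : ∀ t m m', m < (Fc t).card → m' < (Fc t).card → fCe t m = fCe t m' → m = m' := by
    intro t m m' h h' heq
    simp only [hfCe, dif_pos h, dif_pos h'] at heq
    have := (Fc t).equivFin.symm.injective (Subtype.ext heq)
    exact congrArg Fin.val this
  have hfBinj : ∀ t m m', m < (Fb t).card → m' < (Fb t).card → fBe t m = fBe t m' → m = m' := by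
    intro t m m' h h' heq
    simp only [hfBe, dif_pos h, dif_pos h'] at heq
    have := (Fb t).equivFin.symm.injective (Subtype.ext heq)
    exact congrArg Fin.val this
  set cidx : ℕ → ℕ := fun v => if v = 1 then 0 else v - 1 with hcidx
  set bidx : Fin k → ℕ → ℕ := fun t v => if v = 0 then 0 else v - 1 - d' t with hbidx
  have hcidxlt : ∀ (t : Fin k) (v : ℕ), v < sz t → IsC (d' t) v → cidx v < (Fc t).card := by
    intro t v hv hC
    have := hd'c t
    unfold IsC at hC
    simp only [hcidx]
    split_ifs <;> omega
  have hbidxlt : ∀ (t : Fin k) (v : ℕ), v < sz t → ¬ IsC (d' t) v → bidx t v < (Fb t).card := by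
    intro t v hv hC
    have := hd'b t
    have := hFbpos t
    unfold IsC at hC
    simp only [hbidx, hsz] at *
    split_ifs <;> omega
  set elt : (Σ t : Fin k, Fin (sz t)) → (Fin n → Fin q) := fun x =>
    if IsC (d' x.1) ↑x.2 then fCe x.1 (cidx ↑x.2) else fBe x.1 (bidx x.1 ↑x.2) with helt
  have heltC : ∀ x : Σ t : Fin k, Fin (sz t), IsC (d' x.1) ↑x.2 →
      elt x ∈ A ∧ f (elt x) = cB x.1 := by
    intro x hC
    have h1 : elt x ∈ Fc x.1 := by
      simp only [helt, if_pos hC]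
      exact hfCmem _ _ (hcidxlt x.1 ↑x.2 x.2.isLt hC)
    simpa [hFc, Finset.mem_filter] using h1
  have heltB : ∀ x : Σ t : Fin k, Fin (sz t), ¬ IsC (d' x.1) ↑x.2 →
      elt x ∈ A ∧ f (elt x) = bB x.1 := by
    intro x hC
    have h1 : elt x ∈ Fb x.1 := by
      simp only [helt, if_neg hC]
      exact hfBmem _ _ (hbidxlt x.1 ↑x.2 x.2.isLt hC)
    simpa [hFb, Finset.mem_filter] using h1
  have heltA : ∀ x, elt x ∈ A := by
    intro x
    by_cases hC : IsC (d' x.1) ↑x.2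
    · exact (heltC x hC).1
    · exact (heltB x hC).1
  have helt_inj : Function.Injective elt := by
    rintro ⟨t, v⟩ ⟨t', v'⟩ h
    by_cases hC : IsC (d' t) ↑v <;> by_cases hC' : IsC (d' t') ↑v'
    · have e1 := (heltC ⟨t, v⟩ hC).2
      have e2 := (heltC ⟨t', v'⟩ hC').2
      rw [h] at e1
      have htt : t = t' := by
        have hcc2 : cB t' = cB t := e2.symm.trans e1
        have h2 : ((t', true) : Fin k × Bool) = (t, true) := hBCinj hcc2
        exact ((Prod.ext_iff.1 h2).1).symm
      subst htt
      have hcc : cidx ↑v = cidx ↑v' := by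
        apply hfCinj t _ _ (hcidxlt t ↑v v.isLt hC) (hcidxlt t ↑v' v'.isLt hC')
        simpa only [helt, if_pos hC, if_pos hC'] using h
      have : (v : ℕ) = (v' : ℕ) := cidx_inj hC hC' (by simpa [hcidx] using hcc)
      simp [Fin.ext this]
    · exfalso
      have e1 := (heltC ⟨t, v⟩ hC).2
      have e2 := (heltB ⟨t', v'⟩ hC').2
      rw [h] at e1
      have hcb : cB t = bB t' := e1.symm.trans e2
      have h2 : ((t, true) : Fin k × Bool) = (t', false) := hBCinj hcb
      simp at h2
    · exfalso
      have e1 := (heltB ⟨t, v⟩ hC).2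
      have e2 := (heltC ⟨t', v'⟩ hC').2
      rw [h] at e1
      have hbc : bB t = cB t' := e1.symm.trans e2
      have h2 : ((t, false) : Fin k × Bool) = (t', true) := hBCinj hbc
      simp at h2
    · have e1 := (heltB ⟨t, v⟩ hC).2
      have e2 := (heltB ⟨t', v'⟩ hC').2
      rw [h] at e1
      have htt : t = t' := by
        have hbb2 : bB t' = bB t := e2.symm.trans e1
        have h2 : ((t', false) : Fin k × Bool) = (t, false) := hBCinj hbb2
        exact ((Prod.ext_iff.1 h2).1).symm
      subst htt
      have hcc : bidx t ↑v = bidx t ↑v' := by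
        apply hfBinj t _ _ (hbidxlt t ↑v v.isLt hC) (hbidxlt t ↑v' v'.isLt hC')
        simpa only [helt, if_neg hC, if_neg hC'] using h
      have : (v : ℕ) = (v' : ℕ) := bidx_inj hC hC' (by simpa [hbidx] using hcc)
      simp [Fin.ext this]
  -- embeddings into the state space
  set EMB : (Fin n → ZMod 2) → (Fin n → Fin q) :=
    fun x i => if x i = 1 then ⟨1, by omega⟩ else ⟨0, hq0⟩ with hEMB
  have hEMBc : ∀ (w w' : Fin n → ZMod 2) (i : Fin n), EMB w i = EMB w' i → w i = w' i := by
    intro w w' i h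
    simp only [hEMB] at h
    split_ifs at h with h1 h2 h2
    · rw [h1, h2]
    · exact absurd (congrArg Fin.val h) (by simp)
    · exact absurd (congrArg Fin.val h) (by simp)
    · have hz : ∀ c : ZMod 2, c ≠ 1 → c = 0 := by decide
      rw [hz _ h1, hz _ h2]
  have hEMBinj : Function.Injective EMB := by
    intro w w' h
    funext i
    exact hEMBc w w' i (congrFun h i)
  have hEMBne : ∀ (w w' : Fin n → ZMod 2) (i : Fin n), w i ≠ w' i → EMB w i ≠ EMB w' i :=
    fun w w' i hne h => hne (hEMBc w w' i h)
  -- the two global injections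
  set eI : (Σ t : Fin k, Fin (sz t)) ⊕ (Fin k × Bool) → (Fin n → Fin q) :=
    Sum.elim elt (fun p => ↑(eB p)) with heI
  set pI : (Σ t : Fin k, Fin (sz t)) ⊕ (Fin k × Bool) → (Fin n → Fin q) :=
    Sum.elim (fun x => EMB (posA x)) (fun p => EMB (pB p)) with hpI
  have hBnotA : ∀ p : Fin k × Bool, (↑(eB p) : Fin n → Fin q) ∉ A := by
    intro p
    exact Finset.disjoint_left.1 hind (eB p).2
  have heIinj : Function.Injective eI := by
    rintro (x | p) (y | p') h
    · simp only [heI, Sum.elim_inl] at h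
      rw [helt_inj h]
    · exfalso
      simp only [heI, Sum.elim_inl, Sum.elim_inr] at h
      exact hBnotA p' (h ▸ heltA x)
    · exfalso
      simp only [heI, Sum.elim_inl, Sum.elim_inr] at h
      exact hBnotA p (h.symm ▸ heltA y)
    · simp only [heI, Sum.elim_inr] at h
      rw [hBCinj h]
  have hpBinj : Function.Injective pB := by
    rintro ⟨t, s⟩ ⟨t', s'⟩ h
    simp only [hpB] at h
    rcases s <;> rcases s' <;> simp only [if_true, if_false, Bool.false_eq_true] at h
    · rw [hζinj h]
    · exfalso
      have h4 := congrFun h ⟨0, h0n⟩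
      rw [Pi.add_apply, hζ0 t, hζ0 t'] at h4
      exact hzmod01 (by simpa [hone] using h4.symm)
    · exfalso
      have h4 := congrFun h ⟨0, h0n⟩
      rw [Pi.add_apply, hζ0 t, hζ0 t'] at h4
      exact hzmod01 (by simpa [hone] using h4)
    · have : ζ t = ζ t' := add_right_cancel h
      rw [hζinj this]
  have hpBnotP : ∀ (p : Fin k × Bool) (x : Σ t : Fin k, Fin (sz t)), pB p ≠ posA x := by
    rintro ⟨t, s⟩ x h
    have hxP : posA x ∈ P := Finset.mem_image_of_mem posA (Finset.mem_univ x)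
    apply hζP t
    rcases s
    · simp only [hpB, if_neg Bool.false_ne_true] at h
      have hrep : rep (posA x) = ζ t := by
        simp only [hrep]
        rw [if_pos]
        · exact h.symm
        · rw [← h]; exact hζ0 t
      exact hrep ▸ Finset.mem_image_of_mem rep hxP
    · simp only [hpB, if_true] at h
      have hrep : rep (posA x) = ζ t := by
        simp only [hrep]
        rw [if_neg]
        · rw [← h]
          funext i
          simp only [Pi.add_apply]
          rw [add_assoc, hzmod (one i), add_zero]
        · rw [← h]
          rw [Pi.add_apply, hζ0 t]
          intro hc
          exact hzmod01 (by simpa [hone] using hc.symm)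
      exact hrep ▸ Finset.mem_image_of_mem rep hxP
  have hpIinj : Function.Injective pI := by
    rintro (x | p) (y | p') h
    · simp only [hpI, Sum.elim_inl] at h
      rw [hzinj (hEMBinj h)]
    · exfalso
      simp only [hpI, Sum.elim_inl, Sum.elim_inr] at h
      exact hpBnotP p' x (hEMBinj h).symm
    · exfalso
      simp only [hpI, Sum.elim_inl, Sum.elim_inr] at h
      exact hpBnotP p y (hEMBinj h)
    · simp only [hpI, Sum.elim_inr] at h
      rw [hpBinj (hEMBinj h)]
  obtain ⟨π, hπ⟩ := exists_perm_of_embeddings eI pI heIinj hpIinj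
  refine ⟨π, ?_⟩
  intro i j
  have hjlt : (↑j : ℕ) < ∑ i' ∈ Finset.range k, D i' := by
    have := j.isLt
    simp only [hσf] at hσn
    omega
  obtain ⟨t0, ht0k, hσle, hσlt⟩ := exists_block k D ↑j hjlt
  set T : Fin k := ⟨t0, ht0k⟩ with hT
  have hTval : (↑T : ℕ) = t0 := rfl
  have hDt : D t0 = d T := by
    have := hDd T
    rwa [hTval] at this
  set r : ℕ := ↑j - ∑ i' ∈ Finset.range t0, D i' with hrdef
  have hσfT : σf ↑T = ∑ i' ∈ Finset.range t0, D i' := by rw [hTval]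
  have hrd : r < d T := by omega
  have hjr : σf ↑T + r = ↑j := by rw [hσfT]; omega
  obtain ⟨v₁, v₂, hv₁, hv₂, hnC, hC, hall, _⟩ :=
    tree_edge (n := n) (σ := σf ↑T) (d := d T) (d' := d' T) (r := r) hrd (hσblock T)
  have hv₁' : v₁ < sz T := by simp only [hsz]; omega
  have hv₂' : v₂ < sz T := by simp only [hsz]; omega
  set x1 : (Σ t : Fin k, Fin (sz t)) := ⟨T, ⟨v₁, hv₁'⟩⟩ with hx1
  set x2 : (Σ t : Fin k, Fin (sz t)) := ⟨T, ⟨v₂, hv₂'⟩⟩ with hx2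
  refine ⟨EMB (posA x1), EMB (posA x2), ?_, ?_⟩
  · intro l hlj
    have hlv : (↑l : ℕ) ≠ σf ↑T + r := by
      rw [hjr]
      exact fun hc => hlj (Fin.ext hc)
    have hposeq : posA x1 l = posA x2 l := by
      simp only [hposA, Pi.add_apply, hwfun, hx1, hx2]
      rw [hall l hlv]
    simp only [hEMB]
    rw [hposeq]
  · -- the images differ in every coordinate
    have hπ1 : π (eI (Sum.inl x1)) = EMB (posA x1) := hπ (Sum.inl x1)
    have hπ2 : π (eI (Sum.inl x2)) = EMB (posA x2) := hπ (Sum.inl x2)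
    have hs1 : π.symm (EMB (posA x1)) = elt x1 := by
      rw [← hπ1, Equiv.symm_apply_apply]
      simp only [heI, Sum.elim_inl]
    have hs2 : π.symm (EMB (posA x2)) = elt x2 := by
      rw [← hπ2, Equiv.symm_apply_apply]
      simp only [heI, Sum.elim_inl]
    have hf1 : f (elt x1) = bB T := (heltB x1 hnC).2
    have hf2 : f (elt x2) = cB T := (heltC x2 hC).2
    have hπb : π (bB T) = EMB (ζ T) := by
      have h5 := hπ (Sum.inr (T, false))
      simp only [heI, hpI, Sum.elim_inr, hpB, if_neg Bool.false_ne_true] at h5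
      exact h5
    have hπc : π (cB T) = EMB (ζ T + one) := by
      have h5 := hπ (Sum.inr (T, true))
      simp only [heI, hpI, Sum.elim_inr, hpB, if_true] at h5
      exact h5
    show π (f (π.symm (EMB (posA x1)))) i ≠ π (f (π.symm (EMB (posA x2)))) i
    rw [hs1, hs2, hf1, hf2, hπb, hπc]
    apply hEMBne
    rw [Pi.add_apply]
    have hone1 : one i = 1 := rfl
    rw [hone1]
    exact hzmodne (ζ T i)
end

section
/- Let f : Q^n → Q^n with n ≥ 5 and f neither constant nor the identity. Then at least one of the following holds: (a) f has at least 2n fixed points; (b) f has at least n limit cycles of length ≥ 3; (c) f has an independent set of size at least 2n. -/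
open Finset Function

section Core

attribute [local instance] Classical.propDecidable

variable {α : Type*} [Fintype α] (g : α → α)

lemma exists_per (x : α) : ∃ t, 0 < minimalPeriod g (g^[t] x) := by
  have key : ∀ i j : ℕ, i < j → g^[i] x = g^[j] x →
      ∃ t, 0 < minimalPeriod g (g^[t] x) := by
    intro i j hlt heq
    refine ⟨i, ?_⟩
    have hper : IsPeriodicPt g (j - i) (g^[i] x) := by
      show g^[j - i] (g^[i] x) = g^[i] x
      rw [← Function.iterate_add_apply]
      have h1 : j - i + i = j := by omega
      rw [h1, ← heq]
    exact hper.minimalPeriod_pos (by omega)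
  have hni : ¬ Injective (fun t : Fin (Fintype.card α + 1) => g^[(t : ℕ)] x) := by
    intro h
    have := Fintype.card_le_of_injective _ h
    simp at this
  rw [Injective] at hni
  push_neg at hni
  obtain ⟨i, j, heq, hne⟩ := hni
  have hij : (i : ℕ) ≠ (j : ℕ) := fun hc => hne (Fin.ext hc)
  rcases lt_or_gt_of_ne hij with h | h
  · exact key i j h heq
  · exact key j i h heq.symm

noncomputable def rk (x : α) : ℕ := Nat.find (exists_per g x)
noncomputable def ent (x : α) : α := g^[rk g x] x
noncomputable def orb (x : α) : Finset α := (range (minimalPeriod g x)).image fun t => g^[t] x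
noncomputable def bp (x : α) : α := if h : (orb g x).Nonempty then Exists.choose h else g x
noncomputable def ps (x : α) : ℕ := if h : ∃ t, g^[t] (bp g x) = x then Nat.find h else 0
noncomputable def cper (x : α) : ℕ :=
  if minimalPeriod g x = 1 then 2
  else if minimalPeriod g x % 2 = 1 ∧ ps g x = minimalPeriod g x - 1 then 2
  else ps g x % 2
noncomputable def cc (x : α) : ℕ :=
  if 0 < minimalPeriod g x then cper g x
  else ((if cper g (ent g x) = 1 then 1 else 0) + rk g x) % 2

lemma ent_periodic (x : α) : 0 < minimalPeriod g (ent g x) := Nat.find_spec (exists_per g x)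

lemma rk_eq_zero (x : α) (hx : 0 < minimalPeriod g x) : rk g x = 0 := by
  rw [rk, Nat.find_eq_zero]
  simpa using hx

lemma rk_pos (x : α) (hx : ¬ 0 < minimalPeriod g x) : 0 < rk g x := by
  rcases Nat.eq_zero_or_pos (rk g x) with h0 | h0
  · exfalso
    have := ent_periodic g x
    rw [ent, h0] at this
    simp at this
    exact hx this
  · exact h0

lemma rk_apply (x : α) (hx : ¬ 0 < minimalPeriod g x) : rk g (g x) = rk g x - 1 := by
  have h1 : 0 < rk g x := rk_pos g x hx
  rw [rk, Nat.find_eq_iff]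
  constructor
  · have h2 := ent_periodic g x
    rw [ent] at h2
    have h3 : rk g x = rk g x - 1 + 1 := by omega
    rw [h3, Function.iterate_succ_apply] at h2
    exact h2
  · intro k hk
    have h4 := Nat.find_min (exists_per g x) (m := k + 1)
      (by show k + 1 < rk g x; omega)
    rw [← Function.iterate_succ_apply]
    exact h4

lemma ent_apply (x : α) (hx : ¬ 0 < minimalPeriod g x) : ent g (g x) = ent g x := by
  have h1 : 0 < rk g x := rk_pos g x hx
  simp only [ent, rk_apply g x hx]
  rw [← Function.iterate_succ_apply]
  congr 1
  omega

lemma iterate_mod' (x : α) (s : ℕ) :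
    g^[s] x = g^[s % minimalPeriod g x] x :=
  (Function.iterate_mod_minimalPeriod_eq).symm

lemma iterate_mem_orb (x : α) (hx : 0 < minimalPeriod g x) (s : ℕ) :
    g^[s] x ∈ orb g x := by
  rw [orb, Finset.mem_image]
  exact ⟨s % minimalPeriod g x, Finset.mem_range.2 (Nat.mod_lt _ hx),
    (iterate_mod' g x s).symm⟩

lemma mem_orb_self (x : α) (hx : 0 < minimalPeriod g x) : x ∈ orb g x := by
  have := iterate_mem_orb g x hx 0
  simpa using this

lemma mem_orb_per (x y : α) (hx : 0 < minimalPeriod g x) (hy : y ∈ orb g x) :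
    minimalPeriod g y = minimalPeriod g x := by
  rw [orb, Finset.mem_image] at hy
  obtain ⟨t, ht, rfl⟩ := hy
  have hℓ : g^[minimalPeriod g x] x = x := isPeriodicPt_minimalPeriod g x
  have h1 : IsPeriodicPt g (minimalPeriod g x) (g^[t] x) := by
    show g^[minimalPeriod g x] (g^[t] x) = g^[t] x
    rw [← Function.iterate_add_apply, add_comm, Function.iterate_add_apply, hℓ]
  have hback : g^[minimalPeriod g x - t] (g^[t] x) = x := by
    rw [← Function.iterate_add_apply]
    have h3 : minimalPeriod g x - t + t = minimalPeriod g x := by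
      rw [Finset.mem_range] at ht; omega
    rw [h3]
    exact hℓ
  have hdvd : minimalPeriod g (g^[t] x) ∣ minimalPeriod g x := h1.minimalPeriod_dvd
  have hpos : 0 < minimalPeriod g (g^[t] x) := h1.minimalPeriod_pos hx
  have h2 : IsPeriodicPt g (minimalPeriod g (g^[t] x)) x := by
    set m := minimalPeriod g (g^[t] x) with hm
    show g^[m] x = x
    conv_lhs => rw [← hback]
    rw [← Function.iterate_add_apply, add_comm, Function.iterate_add_apply]
    have h5 : g^[m] (g^[t] x) = g^[t] x := isPeriodicPt_minimalPeriod g (g^[t] x)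
    rw [h5]
    exact hback
  exact Nat.dvd_antisymm hdvd h2.minimalPeriod_dvd

lemma orb_eq (x y : α) (hx : 0 < minimalPeriod g x) (hy : y ∈ orb g x) :
    orb g y = orb g x := by
  have hpy : 0 < minimalPeriod g y := by rw [mem_orb_per g x y hx hy]; exact hx
  rw [orb, Finset.mem_image] at hy
  obtain ⟨t, ht, rfl⟩ := hy
  apply Finset.Subset.antisymm
  · intro z hz
    rw [orb, Finset.mem_image] at hz
    obtain ⟨s, _, rfl⟩ := hz
    rw [← Function.iterate_add_apply]
    exact iterate_mem_orb g x hx (s + t)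
  · intro z hz
    rw [orb, Finset.mem_image] at hz
    obtain ⟨s, _, rfl⟩ := hz
    have hℓ : g^[minimalPeriod g x] x = x := isPeriodicPt_minimalPeriod g x
    have hback : g^[minimalPeriod g x - t] (g^[t] x) = x := by
      rw [← Function.iterate_add_apply]
      have h3 : minimalPeriod g x - t + t = minimalPeriod g x := by
        rw [Finset.mem_range] at ht; omega
      rw [h3]; exact hℓ
    have h4 : g^[s] x = g^[s + (minimalPeriod g x - t)] (g^[t] x) := by
      rw [Function.iterate_add_apply, hback]
    rw [h4]
    exact iterate_mem_orb g (g^[t] x) hpy _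

lemma bp_mem (x : α) (hx : 0 < minimalPeriod g x) : bp g x ∈ orb g x := by
  have hne : (orb g x).Nonempty := ⟨x, mem_orb_self g x hx⟩
  rw [bp, dif_pos hne]
  exact hne.choose_spec

lemma bp_eq (x y : α) (hx : 0 < minimalPeriod g x) (hy : y ∈ orb g x) :
    bp g y = bp g x := by
  have h := orb_eq g x y hx hy
  have hne : (orb g x).Nonempty := ⟨x, mem_orb_self g x hx⟩
  rw [bp, bp, h, dif_pos hne, dif_pos hne]

lemma per_bp (x : α) (hx : 0 < minimalPeriod g x) :
    minimalPeriod g (bp g x) = minimalPeriod g x :=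
  mem_orb_per g x _ hx (bp_mem g x hx)

lemma exists_ps (x : α) (hx : 0 < minimalPeriod g x) : ∃ t, g^[t] (bp g x) = x := by
  have h1 : bp g x ∈ orb g x := bp_mem g x hx
  have h2 : x ∈ orb g (bp g x) := by
    rw [orb_eq g x (bp g x) hx h1]
    exact mem_orb_self g x hx
  rw [orb, Finset.mem_image] at h2
  obtain ⟨t, _, hte⟩ := h2
  exact ⟨t, hte⟩

lemma ps_spec (x : α) (hx : 0 < minimalPeriod g x) : g^[ps g x] (bp g x) = x := by
  rw [ps, dif_pos (exists_ps g x hx)]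
  exact Nat.find_spec (exists_ps g x hx)

lemma ps_lt (x : α) (hx : 0 < minimalPeriod g x) : ps g x < minimalPeriod g x := by
  have hex := exists_ps g x hx
  have hbp : 0 < minimalPeriod g (bp g x) := by rw [per_bp g x hx]; exact hx
  have hmod : g^[Nat.find hex % minimalPeriod g x] (bp g x) = x := by
    have := iterate_mod' g (bp g x) (Nat.find hex)
    rw [per_bp g x hx] at this
    rw [← this]
    exact Nat.find_spec hex
  have key : Nat.find hex ≤ Nat.find hex % minimalPeriod g x := Nat.find_min' hex hmod
  have hlt : Nat.find hex % minimalPeriod g x < minimalPeriod g x := Nat.mod_lt _ hx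
  rw [ps, dif_pos hex]
  omega

lemma pos_unique (x : α) (hx : 0 < minimalPeriod g x) {s t : ℕ}
    (hs : s < minimalPeriod g x) (ht : t < minimalPeriod g x)
    (heq : g^[s] (bp g x) = g^[t] (bp g x)) : s = t := by
  have hbp : 0 < minimalPeriod g (bp g x) := by rw [per_bp g x hx]; exact hx
  have key : ∀ u v : ℕ, u < v → v < minimalPeriod g x →
      g^[u] (bp g x) = g^[v] (bp g x) → False := by
    intro u v huv hvl he
    have h1 : IsPeriodicPt g (v - u) (g^[u] (bp g x)) := by
      show g^[v - u] (g^[u] (bp g x)) = g^[u] (bp g x)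
      rw [← Function.iterate_add_apply]
      have h2 : v - u + u = v := by omega
      rw [h2, ← he]
    have hmem : g^[u] (bp g x) ∈ orb g (bp g x) := iterate_mem_orb g (bp g x) hbp u
    have hper : minimalPeriod g (g^[u] (bp g x)) = minimalPeriod g x := by
      rw [mem_orb_per g (bp g x) _ hbp hmem, per_bp g x hx]
    have hle := h1.minimalPeriod_le (by omega)
    omega
  rcases lt_trichotomy s t with h | h | h
  · exact absurd (key s t h ht heq) (by simp)
  · exact h
  · exact absurd (key t s h hs heq.symm) (by simp)

lemma ps_apply (x : α) (hx : 0 < minimalPeriod g x) :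
    ps g (g x) = (ps g x + 1) % minimalPeriod g x := by
  have hgx_mem : g x ∈ orb g x := by
    have := iterate_mem_orb g x hx 1
    simpa using this
  have hpgx : minimalPeriod g (g x) = minimalPeriod g x := mem_orb_per g x (g x) hx hgx_mem
  have hgpos : 0 < minimalPeriod g (g x) := by rw [hpgx]; exact hx
  have hbp : bp g (g x) = bp g x := bp_eq g x (g x) hx hgx_mem
  have hbpos : 0 < minimalPeriod g (bp g x) := by rw [per_bp g x hx]; exact hx
  have e1 : g^[(ps g x + 1) % minimalPeriod g x] (bp g x) = g x := by
    have h1 := iterate_mod' g (bp g x) (ps g x + 1)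
    rw [per_bp g x hx] at h1
    rw [← h1, Function.iterate_succ_apply', ps_spec g x hx]
  have e2 : g^[ps g (g x)] (bp g x) = g x := by
    rw [← hbp]
    exact ps_spec g (g x) hgpos
  have h3 : ps g (g x) < minimalPeriod g x := by
    have := ps_lt g (g x) hgpos
    rwa [hpgx] at this
  exact pos_unique g x hx h3 (Nat.mod_lt _ hx) (e2.trans e1.symm)

lemma cc_fixed (x : α) (hfix : g x = x) : cc g x = 2 := by
  have h1 : IsPeriodicPt g 1 x := by
    show g^[1] x = x
    simpa using hfix
  have hpos : 0 < minimalPeriod g x := h1.minimalPeriod_pos one_pos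
  have hone : minimalPeriod g x = 1 := Nat.dvd_one.1 h1.minimalPeriod_dvd
  rw [cc, if_pos hpos, cper, if_pos hone]

lemma cc_le_two (x : α) : cc g x ≤ 2 := by
  rw [cc]
  split
  · rw [cper]
    split
    · omega
    · split
      · omega
      · omega
  · omega

lemma per_ne_one (x : α) (hne : g x ≠ x) : minimalPeriod g x ≠ 1 := by
  intro h
  apply hne
  have := isPeriodicPt_minimalPeriod g x
  rw [h] at this
  simpa [IsPeriodicPt, IsFixedPt] using this

lemma cc_alt (x : α) (hne : g x ≠ x) : cc g (g x) ≠ cc g x := by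
  by_cases hx : 0 < minimalPeriod g x
  · have h2 : 2 ≤ minimalPeriod g x := by
      have := per_ne_one g x hne
      omega
    have hgx_mem : g x ∈ orb g x := by
      have := iterate_mem_orb g x hx 1
      simpa using this
    have hpgx : minimalPeriod g (g x) = minimalPeriod g x := mem_orb_per g x (g x) hx hgx_mem
    have hgpos : 0 < minimalPeriod g (g x) := by rw [hpgx]; exact hx
    have hps : ps g (g x) = (ps g x + 1) % minimalPeriod g x := ps_apply g x hx
    have hlt := ps_lt g x hx
    rw [cc, if_pos hgpos, cc, if_pos hx, cper, cper, hpgx, hps]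
    rcases Nat.lt_or_ge (ps g x + 1) (minimalPeriod g x) with hc | hc
    · rw [Nat.mod_eq_of_lt hc]
      split_ifs <;> omega
    · have heq : ps g x + 1 = minimalPeriod g x := by omega
      rw [heq, Nat.mod_self]
      split_ifs <;> omega
  · have hr := rk_pos g x hx
    by_cases hr1 : rk g x = 1
    · have hgx : g x = ent g x := by
        rw [ent, hr1]
        simp
      have hper_gx : 0 < minimalPeriod g (g x) := by
        rw [hgx]
        exact ent_periodic g x
      rw [cc, if_pos hper_gx, cc, if_neg hx, hr1]
      have hcgx : cper g (g x) = cper g (ent g x) := by rw [hgx]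
      rw [hcgx]
      by_cases hc : cper g (ent g x) = 1
      · rw [if_pos hc, hc]
        omega
      · rw [if_neg hc]
        omega
    · have hrgx : rk g (g x) = rk g x - 1 := rk_apply g x hx
      have hgx_np : ¬ 0 < minimalPeriod g (g x) := by
        intro hp
        have := rk_eq_zero g (g x) hp
        omega
      rw [cc, if_neg hgx_np, cc, if_neg hx, ent_apply g x hx, hrgx]
      by_cases hc : cper g (ent g x) = 1
      · rw [if_pos hc]
        omega
      · rw [if_neg hc]
        omega

lemma cc_two (x : α) (h2 : cc g x = 2) (hne : g x ≠ x) :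
    0 < minimalPeriod g x ∧ minimalPeriod g x % 2 = 1 ∧ 3 ≤ minimalPeriod g x ∧
      g^[minimalPeriod g x - 1] (bp g x) = x := by
  have hx : 0 < minimalPeriod g x := by
    by_contra hx
    rw [cc, if_neg hx] at h2
    omega
  rw [cc, if_pos hx, cper] at h2
  have hone : minimalPeriod g x ≠ 1 := per_ne_one g x hne
  rw [if_neg hone] at h2
  by_cases hcond : minimalPeriod g x % 2 = 1 ∧ ps g x = minimalPeriod g x - 1
  · obtain ⟨hodd, hpos⟩ := hcond
    refine ⟨hx, hodd, by omega, ?_⟩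
    rw [← hpos]
    exact ps_spec g x hx
  · rw [if_neg hcond] at h2
    omega

lemma cc_two_unique (x y : α) (hx2 : cc g x = 2) (hy2 : cc g y = 2)
    (hnx : g x ≠ x) (hny : g y ≠ y) (s t : ℕ) (he : g^[s] x = g^[t] y) : x = y := by
  obtain ⟨hx, _, _, hxe⟩ := cc_two g x hx2 hnx
  obtain ⟨hy, _, _, hye⟩ := cc_two g y hy2 hny
  have hz1 : g^[s] x ∈ orb g x := iterate_mem_orb g x hx s
  have hz2 : g^[s] x ∈ orb g y := by
    rw [he]
    exact iterate_mem_orb g y hy t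
  have horb : orb g y = orb g x := by
    rw [← orb_eq g x _ hx hz1, ← orb_eq g y _ hy hz2]
  have hxy_mem : y ∈ orb g x := by
    rw [← horb]
    exact mem_orb_self g y hy
  have hper : minimalPeriod g y = minimalPeriod g x := mem_orb_per g x y hx hxy_mem
  have hbp : bp g y = bp g x := bp_eq g x y hx hxy_mem
  rw [← hxe, ← hye, hbp, hper]

end Core

lemma two_pow_big {n : ℕ} (hn : 5 ≤ n) : 7 * n - 3 ≤ 2 ^ n := by
  induction n with
  | zero => omega
  | succ k ih =>
    rcases Nat.lt_or_ge k 5 with hk | hk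
    · interval_cases k <;> simp_all <;> omega
    · have h1 := ih hk
      have h2 : 2 ^ (k + 1) = 2 * 2 ^ k := by ring
      omega
theorem fixed_points_or_cycles_or_independent {n q : ℕ} (hn : 5 ≤ n) (hq : 2 ≤ q)
    (f : (Fin n → Fin q) → (Fin n → Fin q))
    (hconst : ¬ ∃ c, f = fun _ => c) (hid : f ≠ id) :
    -- (a) at least 2n fixed points
    (2 * n ≤ (univ.filter (fun x : Fin n → Fin q => f x = x)).card) ∨
    -- (b) at least n limit cycles of length ≥ 3
    (∃ a : Fin n → (Fin n → Fin q),
      (∀ m : Fin n, ∃ p, 3 ≤ p ∧ f^[p] (a m) = a m ∧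
        ∀ t, 0 < t → t < p → f^[t] (a m) ≠ a m) ∧
      (∀ m m' : Fin n, m ≠ m' → ∀ s t : ℕ, f^[s] (a m) ≠ f^[t] (a m'))) ∨
    -- (c) an independent set of size at least 2n
    (∃ A : Finset (Fin n → Fin q), Disjoint (A.image f) A ∧ 2 * n ≤ A.card) := by
  classical
  by_cases ha : 2 * n ≤ (univ.filter (fun x : Fin n → Fin q => f x = x)).card
  · exact Or.inl ha
  push_neg at ha
  set D : Finset (Fin n → Fin q) :=
    univ.filter (fun x => cc f x = 2 ∧ f x ≠ x) with hDdef
  by_cases hD : n ≤ D.card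
  · refine Or.inr (Or.inl ?_)
    obtain ⟨T, hTsub, hTcard⟩ := Finset.exists_subset_card_eq hD
    have e := Finset.equivFinOfCardEq hTcard
    have hmemD : ∀ m : Fin n, ((e.symm m : T) : Fin n → Fin q) ∈ D := fun m =>
      hTsub (e.symm m).2
    have hprops : ∀ m : Fin n, cc f ((e.symm m : T) : Fin n → Fin q) = 2 ∧
        f ((e.symm m : T) : Fin n → Fin q) ≠ ((e.symm m : T) : Fin n → Fin q) := by
      intro m
      have := hmemD m
      rw [hDdef, Finset.mem_filter] at this
      exact this.2
    refine ⟨fun m => ((e.symm m : T) : Fin n → Fin q), ?_, ?_⟩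
    · intro m
      obtain ⟨h2, hne⟩ := hprops m
      obtain ⟨hpos, _, h3, _⟩ := cc_two f _ h2 hne
      refine ⟨Function.minimalPeriod f ((e.symm m : T) : Fin n → Fin q), h3, ?_, ?_⟩
      · exact Function.isPeriodicPt_minimalPeriod f _
      · intro t ht0 htp hteq
        have hpp : Function.IsPeriodicPt f t ((e.symm m : T) : Fin n → Fin q) := hteq
        have := hpp.minimalPeriod_le ht0
        omega
    · intro m m' hmm s t he
      obtain ⟨h2, hne⟩ := hprops m
      obtain ⟨h2', hne'⟩ := hprops m'
      have hxy := cc_two_unique f _ _ h2 h2' hne hne' s t he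
      apply hmm
      have : (e.symm m : T) = (e.symm m' : T) := Subtype.ext hxy
      exact e.symm.injective this
  · push_neg at hD
    refine Or.inr (Or.inr ?_)
    have hA2sub : (univ.filter (fun x : Fin n → Fin q => cc f x = 2)) ⊆
        (univ.filter (fun x : Fin n → Fin q => f x = x)) ∪ D := by
      intro x hx
      rw [Finset.mem_filter] at hx
      rw [Finset.mem_union, hDdef, Finset.mem_filter, Finset.mem_filter]
      by_cases hfx : f x = x
      · exact Or.inl ⟨Finset.mem_univ x, hfx⟩
      · exact Or.inr ⟨Finset.mem_univ x, hx.2, hfx⟩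
    have hA2card : (univ.filter (fun x : Fin n → Fin q => cc f x = 2)).card ≤
        (univ.filter (fun x : Fin n → Fin q => f x = x)).card + D.card :=
      le_trans (Finset.card_le_card hA2sub) (Finset.card_union_le _ _)
    have hcover : (univ : Finset (Fin n → Fin q)) ⊆
        (univ.filter (fun x => cc f x = 0)) ∪ (univ.filter (fun x => cc f x = 1)) ∪
        (univ.filter (fun x => cc f x = 2)) := by
      intro x _
      have := cc_le_two f x
      simp only [Finset.mem_union, Finset.mem_filter, Finset.mem_univ, true_and]
      omega
    have hN : Fintype.card (Fin n → Fin q) ≤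
        (univ.filter (fun x : Fin n → Fin q => cc f x = 0)).card +
        (univ.filter (fun x : Fin n → Fin q => cc f x = 1)).card +
        (univ.filter (fun x : Fin n → Fin q => cc f x = 2)).card := by
      calc Fintype.card (Fin n → Fin q) = (univ : Finset (Fin n → Fin q)).card :=
            (Finset.card_univ).symm
        _ ≤ _ := le_trans (Finset.card_le_card hcover)
            (le_trans (Finset.card_union_le _ _)
              (by exact Nat.add_le_add_right (Finset.card_union_le _ _) _))
    have hpow : 7 * n - 3 ≤ Fintype.card (Fin n → Fin q) := by
      have h1 : Fintype.card (Fin n → Fin q) = q ^ n := by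
        rw [Fintype.card_fun, Fintype.card_fin, Fintype.card_fin]
      have h2 : (2 : ℕ) ^ n ≤ q ^ n := Nat.pow_le_pow_left hq n
      have h3 := two_pow_big hn
      omega
    have hbig : 4 * n - 1 ≤ (univ.filter (fun x : Fin n → Fin q => cc f x = 0)).card +
        (univ.filter (fun x : Fin n → Fin q => cc f x = 1)).card := by
      omega
    have hind : ∀ i : ℕ, i ≤ 1 →
        Disjoint (((univ.filter (fun x : Fin n → Fin q => cc f x = i))).image f)
          (univ.filter (fun x : Fin n → Fin q => cc f x = i)) := by
      intro i hi
      rw [Finset.disjoint_left]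
      intro y hyim hy
      obtain ⟨x, hxA, rfl⟩ := Finset.mem_image.1 hyim
      rw [Finset.mem_filter] at hxA hy
      have hnx : f x ≠ x := by
        intro hfx
        have := cc_fixed f x hfx
        omega
      exact cc_alt f x hnx (by rw [hy.2, hxA.2])
    rcases le_total ((univ.filter (fun x : Fin n → Fin q => cc f x = 0)).card)
        ((univ.filter (fun x : Fin n → Fin q => cc f x = 1)).card) with hle | hle
    · exact ⟨univ.filter (fun x => cc f x = 1), hind 1 le_rfl, by omega⟩
    · exact ⟨univ.filter (fun x => cc f x = 0), hind 0 (by omega), by omega⟩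
end

section
/- For every f : {0,1}^n → {0,1}^n and every k with 3·s(2^k, 2) ≤ 2^{n-1}, f has a balanced k-nice partition: a partition {A_1, A_2} of {0,1}^n with |A_1| = |A_2| = 2^{n-1} such that |A_ℓ ∩ f^{-1}(A_p)| is a multiple of 2^k for all ℓ, p ∈ {1,2}. -/
open Finset

/-- `DavProp m d s` : any `d` functions `[s] → ℕ` admit a size-`m` subset on which
all `d` sums vanish modulo `m`. -/
def DavProp (m d s : ℕ) : Prop :=
  ∀ a : Fin d → Fin s → ℕ, ∃ X : Finset (Fin s), X.card = m ∧
    ∀ i : Fin d, m ∣ ∑ x ∈ X, a i x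

/-- `sDav m d` is the smallest `s` satisfying `DavProp m d s`. -/
noncomputable def sDav (m d : ℕ) : ℕ := sInf {s | DavProp m d s}

lemma davProp_one : DavProp 1 2 1 := by
  intro a
  refine ⟨{0}, by simp, by simp⟩

lemma davProp_two_five : DavProp 2 2 5 := by
  intro a
  have h : ∃ x ∈ (univ : Finset (Fin 5)), ∃ y ∈ (univ : Finset (Fin 5)), x ≠ y ∧
      (a 0 x % 2, a 1 x % 2) = (a 0 y % 2, a 1 y % 2) := by
    have hmaps : ∀ x ∈ (univ : Finset (Fin 5)),
        ((a 0 x % 2, a 1 x % 2) : ℕ × ℕ) ∈ (Finset.range 2 ×ˢ Finset.range 2) := by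
      intro x _
      simp [Finset.mem_product, Nat.mod_lt]
      constructor <;> omega
    have hcard : (Finset.range 2 ×ˢ Finset.range 2).card < (univ : Finset (Fin 5)).card := by
      simp
    exact Finset.exists_ne_map_eq_of_card_lt_of_maps_to hcard hmaps
  obtain ⟨x, -, y, -, hxy, h2⟩ := h
  refine ⟨{x, y}, by rw [Finset.card_insert_of_notMem (by simpa using hxy)]; simp, ?_⟩
  intro i
  rw [Finset.sum_insert (by simpa using hxy), Finset.sum_singleton]
  have h0 := congrArg Prod.fst h2
  have h1 := congrArg Prod.snd h2
  simp only at h0 h1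
  have key : a i x % 2 = a i y % 2 := by
    rcases i with ⟨iv, hiv⟩
    interval_cases iv
    · exact h0
    · exact h1
  omega


/-- Extraction form: from a pool of size at least `s` we can pick a zero-sum `m`-subset. -/
lemma dav_extract {m s : ℕ} (h : DavProp m 2 s) {α : Type*} [DecidableEq α]
    (S : Finset α) (hS : s ≤ S.card) (a b : α → ℕ) :
    ∃ X : Finset α, X ⊆ S ∧ X.card = m ∧ m ∣ ∑ x ∈ X, a x ∧ m ∣ ∑ x ∈ X, b x := by
  obtain ⟨S', hS'sub, hS'card⟩ := Finset.exists_subset_card_eq hS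
  have hcard : Fintype.card { x // x ∈ S' } = s := by
    simpa using hS'card
  let e : Fin s → { x // x ∈ S' } := (Fintype.equivFinOfCardEq hcard).symm
  have he : Function.Injective e := (Fintype.equivFinOfCardEq hcard).symm.injective
  obtain ⟨X', hX'card, hX'⟩ := h (fun i x => if i = 0 then a (e x) else b (e x))
  refine ⟨X'.image (fun i => (e i : α)), ?_, ?_, ?_, ?_⟩
  · intro x hx
    simp only [Finset.mem_image] at hx
    obtain ⟨i, -, rfl⟩ := hx
    exact hS'sub (e i).2
  · rw [Finset.card_image_of_injective _ (fun i j hij => he (Subtype.ext hij))]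
    exact hX'card
  · rw [Finset.sum_image (fun i _ j _ hij => he (Subtype.ext hij))]
    simpa using hX' 0
  · rw [Finset.sum_image (fun i _ j _ hij => he (Subtype.ext hij))]
    simpa using hX' 1

/-- Extract several pairwise disjoint zero-sum subsets. -/
lemma dav_extract_many {m s : ℕ} (h : DavProp m 2 s) {α : Type*} [DecidableEq α]
    (a b : α → ℕ) :
    ∀ (j : ℕ) (S : Finset α), s + m * j ≤ S.card + m →
    ∃ Y : Fin j → Finset α, (∀ i, Y i ⊆ S) ∧
      (∀ i i', i ≠ i' → Disjoint (Y i) (Y i')) ∧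
      (∀ i, (Y i).card = m ∧ m ∣ ∑ x ∈ Y i, a x ∧ m ∣ ∑ x ∈ Y i, b x) := by
  intro j
  induction j with
  | zero =>
    intro S _
    exact ⟨fun i => i.elim0, fun i => i.elim0, fun i => i.elim0, fun i => i.elim0⟩
  | succ j ih =>
    intro S hS
    have h1 : m * (j + 1) = m * j + m := by ring
    have hs : s ≤ S.card := by omega
    obtain ⟨X, hXsub, hXcard, hXa, hXb⟩ := dav_extract h S hs a b
    have hcard' : (S \ X).card = S.card - m := by
      rw [Finset.card_sdiff_of_subset hXsub, hXcard]
    have hmS : m ≤ S.card := hXcard ▸ Finset.card_le_card hXsub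
    have hrec : s + m * j ≤ (S \ X).card + m := by
      rw [hcard']
      omega
    obtain ⟨Y', hY'sub, hY'dis, hY'prop⟩ := ih (S \ X) hrec
    refine ⟨Fin.cons X Y', ?_, ?_, ?_⟩
    · intro i
      refine Fin.cases ?_ ?_ i
      · exact hXsub
      · intro i'
        exact (hY'sub i').trans (Finset.sdiff_subset)
    · intro i i' hne
      revert hne
      refine Fin.cases ?_ ?_ i
      · refine Fin.cases ?_ ?_ i'
        · intro hne; exact absurd rfl hne
        · intro p _
          simp only [Fin.cons_zero, Fin.cons_succ]
          exact disjoint_sdiff_self_right.mono_right (hY'sub p)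
      · intro p
        refine Fin.cases ?_ ?_ i'
        · intro _
          simp only [Fin.cons_zero, Fin.cons_succ]
          exact (disjoint_sdiff_self_right.mono_right (hY'sub p)).symm
        · intro q hne
          simp only [Fin.cons_succ]
          exact hY'dis p q (fun hpq => hne (by rw [hpq]))
    · intro i
      refine Fin.cases ?_ ?_ i
      · exact ⟨hXcard, hXa, hXb⟩
      · intro i'
        exact hY'prop i'


lemma davProp_double {m : ℕ} (hm : 1 ≤ m) (h : DavProp m 2 (4 * m - 3)) :
    DavProp (2 * m) 2 (4 * (2 * m) - 3) := by
  intro a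
  have hcard : (univ : Finset (Fin (4 * (2 * m) - 3))).card = 8 * m - 3 := by
    simp
    omega
  have hle : (4 * m - 3) + m * 5 ≤ (univ : Finset (Fin (4 * (2 * m) - 3))).card + m := by
    rw [hcard]; omega
  obtain ⟨Y, hYsub, hYdis, hYprop⟩ := dav_extract_many h (fun x => a 0 x) (fun x => a 1 x) 5 univ hle
  -- block sums divided by m
  obtain ⟨W, hWcard, hW⟩ := davProp_two_five
    (fun i t => if i = 0 then (∑ x ∈ Y t, a 0 x) / m else (∑ x ∈ Y t, a 1 x) / m)
  obtain ⟨u, v, huv, rfl⟩ := Finset.card_eq_two.1 hWcard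
  refine ⟨Y u ∪ Y v, ?_, ?_⟩
  · rw [Finset.card_union_of_disjoint (hYdis u v huv), (hYprop u).1, (hYprop v).1]
    ring
  · intro i
    have key : ∀ (g : Fin (4 * (2 * m) - 3) → ℕ),
        m ∣ ∑ x ∈ Y u, g x → m ∣ ∑ x ∈ Y v, g x →
        2 ∣ (∑ x ∈ Y u, g x) / m + (∑ x ∈ Y v, g x) / m →
        2 * m ∣ ∑ x ∈ Y u ∪ Y v, g x := by
      intro g hu hv h2
      rw [Finset.sum_union (hYdis u v huv)]
      obtain ⟨cu, hcu⟩ := hu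
      obtain ⟨cv, hcv⟩ := hv
      obtain ⟨d, hd⟩ := h2
      rw [hcu, hcv]
      rw [hcu, hcv, Nat.mul_div_cancel_left _ hm, Nat.mul_div_cancel_left _ hm] at hd
      exact ⟨d, by rw [← Nat.mul_add, hd]; ring⟩
    have h0 := hW 0
    have h1 := hW 1
    simp only [if_pos rfl, if_neg (by decide : (1 : Fin 2) ≠ 0)] at h0 h1
    rw [Finset.sum_pair huv] at h0 h1
    rcases i with ⟨iv, hiv⟩
    interval_cases iv
    · exact key _ (hYprop u).2.1 (hYprop v).2.1 h0
    · exact key _ (hYprop u).2.2 (hYprop v).2.2 h1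

lemma davProp_pow : ∀ k : ℕ, DavProp (2 ^ k) 2 (4 * 2 ^ k - 3)
  | 0 => by simpa using davProp_one
  | (k + 1) => by
    have h := davProp_double (Nat.one_le_two_pow) (davProp_pow k)
    have e1 : 2 * 2 ^ k = 2 ^ (k + 1) := by ring
    rw [e1] at h
    exact h


lemma class_count {s : ℕ} (j : ℕ) :
    ((univ : Finset (Fin s)).filter (fun x => x.val % 4 = j)).card ≤ (s + 3) / 4 := by
  have : ((univ : Finset (Fin s)).filter (fun x => x.val % 4 = j)).card ≤
      (Finset.range ((s + 3) / 4)).card := by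
    apply Finset.card_le_card_of_injOn (fun x => x.val / 4)
    · intro x hx
      simp only [Finset.mem_coe, Finset.mem_filter] at hx
      have hxs : x.val < s := x.2
      simp only [Finset.mem_coe, Finset.mem_range]
      omega
    · intro x hx y hy hxy
      simp only [Finset.mem_filter, Finset.mem_coe] at hx hy
      have hxy' : x.val / 4 = y.val / 4 := hxy
      have hxs : x.val < s := x.2
      have hys : y.val < s := y.2
      apply Fin.ext
      omega
  simpa using this

lemma davProp_lower {m s : ℕ} (hm : 2 ≤ m) (h : DavProp m 2 s) : 4 * m - 3 ≤ s := by
  by_contra hcon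
  push_neg at hcon
  have hs : s ≤ 4 * m - 4 := by omega
  obtain ⟨X, hXcard, hX⟩ := h (fun i x => if i = 0 then x.val % 4 % 2 else x.val % 4 / 2)
  have h0 : m ∣ ∑ x ∈ X, x.val % 4 % 2 := by simpa using hX 0
  have h1 : m ∣ ∑ x ∈ X, x.val % 4 / 2 := by simpa using hX 1
  set n0 := (X.filter (fun x => x.val % 4 = 0)).card with hn0
  set n1 := (X.filter (fun x => x.val % 4 = 1)).card with hn1
  set n2 := (X.filter (fun x => x.val % 4 = 2)).card with hn2
  set n3 := (X.filter (fun x => x.val % 4 = 3)).card with hn3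
  have hA : n0 + n1 + n2 + n3 = m := by
    rw [hn0, hn1, hn2, hn3, Finset.card_filter, Finset.card_filter, Finset.card_filter,
      Finset.card_filter, ← Finset.sum_add_distrib, ← Finset.sum_add_distrib,
      ← Finset.sum_add_distrib, ← hXcard, Finset.card_eq_sum_ones]
    apply Finset.sum_congr rfl
    intro x _
    have : x.val % 4 < 4 := Nat.mod_lt _ (by norm_num)
    split_ifs <;> omega
  have hB : ∑ x ∈ X, x.val % 4 % 2 = n1 + n3 := by
    rw [hn1, hn3, Finset.card_filter, Finset.card_filter, ← Finset.sum_add_distrib]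
    apply Finset.sum_congr rfl
    intro x _
    have : x.val % 4 < 4 := Nat.mod_lt _ (by norm_num)
    split_ifs <;> omega
  have hC : ∑ x ∈ X, x.val % 4 / 2 = n2 + n3 := by
    rw [hn2, hn3, Finset.card_filter, Finset.card_filter, ← Finset.sum_add_distrib]
    apply Finset.sum_congr rfl
    intro x _
    have : x.val % 4 < 4 := Nat.mod_lt _ (by norm_num)
    split_ifs <;> omega
  have hbound : ∀ j, (X.filter (fun x => x.val % 4 = j)).card ≤ m - 1 := by
    intro j
    have h1' : (X.filter (fun x => x.val % 4 = j)).card ≤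
        ((univ : Finset (Fin s)).filter (fun x => x.val % 4 = j)).card :=
      Finset.card_le_card (Finset.filter_subset_filter _ (Finset.subset_univ X))
    have h2' := class_count (s := s) j
    omega
  have hb0 := hbound 0
  have hb1 := hbound 1
  have hb2 := hbound 2
  have hb3 := hbound 3
  rw [← hn0] at hb0
  rw [← hn1] at hb1
  rw [← hn2] at hb2
  rw [← hn3] at hb3
  rw [hB] at h0
  rw [hC] at h1
  obtain ⟨c0, hc0⟩ := h0
  obtain ⟨c1, hc1⟩ := h1
  have hx0 : n1 + n3 = 0 ∨ n1 + n3 = m := by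
    have hcases : c0 = 0 ∨ c0 = 1 ∨ 2 ≤ c0 := by omega
    rcases hcases with rfl | rfl | hc
    · left; omega
    · right; omega
    · exfalso
      have h2 : m * 2 ≤ m * c0 := Nat.mul_le_mul_left m hc
      omega
  have hx1 : n2 + n3 = 0 ∨ n2 + n3 = m := by
    have hcases : c1 = 0 ∨ c1 = 1 ∨ 2 ≤ c1 := by omega
    rcases hcases with rfl | rfl | hc
    · left; omega
    · right; omega
    · exfalso
      have h2 : m * 2 ≤ m * c1 := Nat.mul_le_mul_left m hc
      omega
  omega

lemma sDav_lower (k : ℕ) : 4 * 2 ^ k - 3 ≤ sDav (2 ^ k) 2 := by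
  have hne : {s | DavProp (2 ^ k) 2 s}.Nonempty := ⟨_, davProp_pow k⟩
  have hmem : DavProp (2 ^ k) 2 (sDav (2 ^ k) 2) := Nat.sInf_mem hne
  rcases Nat.eq_zero_or_pos k with rfl | hk
  · -- m = 1 : need 1 ≤ sDav
    obtain ⟨X, hXcard, -⟩ := hmem (fun _ _ => 0)
    have hXne : X.Nonempty := Finset.card_pos.1 (by simp [hXcard])
    obtain ⟨x, -⟩ := hXne
    have hpos := x.pos
    have hp : (2 : ℕ) ^ 0 = 1 := rfl
    omega
  · have hm : 2 ≤ 2 ^ k := by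
      calc 2 = 2 ^ 1 := by norm_num
      _ ≤ 2 ^ k := Nat.pow_le_pow_right (by norm_num) hk
    exact davProp_lower hm hmem


/-- Any functional graph on a finite set has an independent set of size `r`
provided the vertex set has at least `3r` elements. -/
lemma exists_indep {α : Type*} [DecidableEq α] (f : α → α) :
    ∀ (r : ℕ) (S : Finset α), 3 * r ≤ S.card →
    ∃ P : Finset α, P ⊆ S ∧ P.card = r ∧
      ∀ x ∈ P, ∀ y ∈ P, x ≠ y → f x ≠ y := by
  intro r
  induction r with
  | zero =>
    intro S _
    exact ⟨∅, Finset.empty_subset _, Finset.card_empty, by simp⟩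
  | succ r ih =>
    intro S hS
    have hSpos : 0 < S.card := by omega
    -- find a vertex of in-degree at most 1 inside S
    have hkey : ∃ u ∈ S, (S.filter (fun x => f x = u)).card ≤ 1 := by
      by_contra hall
      push_neg at hall
      have hsum : ∑ u ∈ S, (S.filter (fun x => f x = u)).card ≤ S.card := by
        have h1 : (S.filter (fun x => f x ∈ S)).card =
            ∑ u ∈ S, ((S.filter (fun x => f x ∈ S)).filter (fun x => f x = u)).card :=
          Finset.card_eq_sum_card_fiberwise (fun x hx => (Finset.mem_filter.1 hx).2)
        have h2 : ∑ u ∈ S, (S.filter (fun x => f x = u)).card =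
            ∑ u ∈ S, ((S.filter (fun x => f x ∈ S)).filter (fun x => f x = u)).card := by
          apply Finset.sum_congr rfl
          intro u hu
          congr 1
          ext x
          simp only [Finset.mem_filter]
          constructor
          · rintro ⟨hx, hfx⟩
            exact ⟨⟨hx, hfx ▸ hu⟩, hfx⟩
          · rintro ⟨⟨hx, -⟩, hfx⟩
            exact ⟨hx, hfx⟩
        rw [h2, ← h1]
        exact Finset.card_filter_le _ _
      have hsum2 : 2 * S.card ≤ ∑ u ∈ S, (S.filter (fun x => f x = u)).card := by
        calc 2 * S.card = ∑ _u ∈ S, 2 := by rw [Finset.sum_const, smul_eq_mul]; ring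
        _ ≤ _ := Finset.sum_le_sum (fun u hu => hall u hu)
      omega
    obtain ⟨u, huS, hdeg⟩ := hkey
    set R : Finset α := insert u (insert (f u) (S.filter (fun x => f x = u))) with hR
    have hRcard : R.card ≤ 3 := by
      calc R.card ≤ (insert (f u) (S.filter (fun x => f x = u))).card + 1 :=
            Finset.card_insert_le _ _
      _ ≤ (S.filter (fun x => f x = u)).card + 1 + 1 := by
            have := Finset.card_insert_le (f u) (S.filter (fun x => f x = u))
            omega
      _ ≤ 3 := by omega
    have hS' : 3 * r ≤ (S \ R).card := by
      have h1 := Finset.le_card_sdiff R S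
      omega
    obtain ⟨P', hP'sub, hP'card, hP'ind⟩ := ih (S \ R) hS'
    have huP' : u ∉ P' := fun hu => by
      have := hP'sub hu
      rw [Finset.mem_sdiff] at this
      exact this.2 (by simp [hR])
    refine ⟨insert u P', ?_, ?_, ?_⟩
    · intro x hx
      rcases Finset.mem_insert.1 hx with rfl | hx
      · exact huS
      · exact (Finset.sdiff_subset) (hP'sub hx)
    · rw [Finset.card_insert_of_notMem huP', hP'card]
    · intro x hx y hy hxy
      rcases Finset.mem_insert.1 hx with hxu | hx <;>
        rcases Finset.mem_insert.1 hy with hyu | hy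
      · exact absurd (hxu.trans hyu.symm) hxy
      · -- x = u, y ∈ P' : f u ≠ y since y ∉ R ∋ f u
        rw [hxu]
        intro hfu
        have hyR := (Finset.mem_sdiff.1 (hP'sub hy)).2
        exact hyR (by rw [hR, ← hfu]; simp)
      · -- x ∈ P', y = u : f x = u would put x in the filter ⊆ R
        rw [hyu]
        intro hfx
        have hxS := Finset.mem_sdiff.1 (hP'sub hx)
        exact hxS.2 (by rw [hR]; simp [Finset.mem_filter, hxS.1, hfx])
      · exact hP'ind x hx y hy hxy


section Grow
variable {V : Type*} [Fintype V] [DecidableEq V]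

lemma grow (f : V → V) {m s T : ℕ} (hdav : DavProp m 2 s)
    (hN : Fintype.card V = 2 * T) (h3 : 3 * s ≤ T) :
    ∀ j : ℕ, j * m ≤ T → ∃ A : Finset V, A.card = j * m ∧
      (m ∣ ∑ y ∈ A, (univ.filter (fun x => f x = y)).card) ∧
      m ∣ (A.filter (fun x => f x ∈ A)).card := by
  intro j
  induction j with
  | zero => exact fun _ => ⟨∅, by simp, by simp, by simp⟩
  | succ j ih =>
    intro hj
    have hmul : (j + 1) * m = j * m + m := by ring
    have hj' : j * m ≤ T := by omega
    obtain ⟨A, hAcard, hAdeg, hA11⟩ := ih hj'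
    set Free : Finset V := univ \ A with hFree
    have hFreecard : Free.card = 2 * T - j * m := by
      rw [hFree, Finset.card_sdiff_of_subset (Finset.subset_univ A), hAcard, Finset.card_univ, hN]
    have hFreeBig : 3 * s ≤ Free.card := by omega
    obtain ⟨P, hPsub, hPcard, hPind⟩ := exists_indep f s Free hFreeBig
    obtain ⟨X, hXP, hXcard, hXa, hXb⟩ := dav_extract hdav P (le_of_eq hPcard.symm)
      (fun x => (univ.filter (fun z => f z = x)).card)
      (fun x => (A.filter (fun z => f z = x)).card +
        ((if f x ∈ A then 1 else 0) + (if f x = x then 1 else 0)))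
    have hXFree : X ⊆ Free := hXP.trans hPsub
    have hdisj : Disjoint A X := by
      rw [Finset.disjoint_left]
      intro x hxA hxX
      have := hXFree hxX
      rw [hFree, Finset.mem_sdiff] at this
      exact this.2 hxA
    have hXind : ∀ x ∈ X, f x ∈ X → f x = x := by
      intro x hx hfx
      by_contra hne
      exact hPind x (hXP hx) (f x) (hXP hfx) (fun h => hne h.symm) rfl
    have hXnotA : ∀ x ∈ X, x ∉ A := by
      intro x hx
      have := hXFree hx
      rw [hFree, Finset.mem_sdiff] at this
      exact this.2
    refine ⟨A ∪ X, ?_, ?_, ?_⟩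
    · rw [Finset.card_union_of_disjoint hdisj, hAcard, hXcard, hmul]
    · rw [Finset.sum_union hdisj]
      exact dvd_add hAdeg hXa
    · -- the key counting identity
      have key : ((A ∪ X).filter (fun x => f x ∈ A ∪ X)).card =
          (A.filter (fun x => f x ∈ A)).card +
          ∑ x ∈ X, ((A.filter (fun z => f z = x)).card +
            ((if f x ∈ A then 1 else 0) + (if f x = x then 1 else 0))) := by
        rw [Finset.filter_union]
        rw [Finset.card_union_of_disjoint
          (Finset.disjoint_filter_filter hdisj)]
        have split1 : (A.filter (fun x => f x ∈ A ∪ X)).card =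
            (A.filter (fun x => f x ∈ A)).card + (A.filter (fun x => f x ∈ X)).card := by
          rw [← Finset.card_union_of_disjoint]
          · congr 1
            ext x
            simp only [Finset.mem_filter, Finset.mem_union]
            tauto
          · rw [Finset.disjoint_left]
            intro x hx1 hx2
            rw [Finset.mem_filter] at hx1 hx2
            exact (Finset.disjoint_left.1 hdisj) hx1.2 hx2.2
        have split2 : (A.filter (fun x => f x ∈ X)).card =
            ∑ x ∈ X, (A.filter (fun z => f z = x)).card := by
          have h1 : (A.filter (fun z => f z ∈ X)).card =
              ∑ x ∈ X, ((A.filter (fun z => f z ∈ X)).filter (fun z => f z = x)).card :=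
            Finset.card_eq_sum_card_fiberwise (fun z hz => (Finset.mem_filter.1 hz).2)
          rw [h1]
          apply Finset.sum_congr rfl
          intro x hxX
          congr 1
          ext z
          simp only [Finset.mem_filter]
          constructor
          · rintro ⟨⟨hz, -⟩, h2⟩
            exact ⟨hz, h2⟩
          · rintro ⟨hz, h2⟩
            exact ⟨⟨hz, h2 ▸ hxX⟩, h2⟩
        have split3 : (X.filter (fun x => f x ∈ A ∪ X)).card =
            ∑ x ∈ X, ((if f x ∈ A then 1 else 0) + (if f x = x then 1 else 0)) := by
          rw [Finset.card_filter]
          apply Finset.sum_congr rfl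
          intro x hx
          by_cases hA : f x ∈ A
          · have hnx : f x ≠ x := fun h => (hXnotA x hx) (h ▸ hA)
            have hm : f x ∈ A ∪ X := Finset.mem_union_left _ hA
            rw [if_pos hm, if_pos hA, if_neg hnx]
          · by_cases hfx : f x = x
            · have hm : f x ∈ A ∪ X := Finset.mem_union_right _ (by rw [hfx]; exact hx)
              rw [if_pos hm, if_neg hA, if_pos hfx]
            · have hnX : f x ∉ X := fun hmem => hfx (hXind x hx hmem)
              have hm : f x ∉ A ∪ X := by
                rw [Finset.mem_union]
                tauto
              rw [if_neg hm, if_neg hA, if_neg hfx]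
        have hdistr : ∑ x ∈ X, ((A.filter (fun z => f z = x)).card +
            ((if f x ∈ A then 1 else 0) + (if f x = x then 1 else 0))) =
            (∑ x ∈ X, (A.filter (fun z => f z = x)).card) +
            ∑ x ∈ X, ((if f x ∈ A then 1 else 0) + (if f x = x then 1 else 0)) :=
          Finset.sum_add_distrib
        rw [split1, split2, split3, hdistr]
        ring
      rw [key]
      exact dvd_add hA11 hXb
end Grow


theorem balanced_nice_partition_exists {n k : ℕ} (hn : 1 ≤ n)
    (f : (Fin n → Fin 2) → (Fin n → Fin 2))
    (hk : 3 * sDav (2 ^ k) 2 ≤ 2 ^ (n - 1)) :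
    ∃ A : Finset (Fin n → Fin 2), A.card = 2 ^ (n - 1) ∧
      2 ^ k ∣ (A.filter (fun x => f x ∈ A)).card ∧
      2 ^ k ∣ (A.filter (fun x => f x ∈ Aᶜ)).card ∧
      2 ^ k ∣ (Aᶜ.filter (fun x => f x ∈ A)).card ∧
      2 ^ k ∣ (Aᶜ.filter (fun x => f x ∈ Aᶜ)).card := by
  set m : ℕ := 2 ^ k with hm
  set s : ℕ := 4 * 2 ^ k - 3 with hs
  set T : ℕ := 2 ^ (n - 1) with hT
  have hmpos : 1 ≤ m := Nat.one_le_two_pow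
  have h3 : 3 * s ≤ T := le_trans (Nat.mul_le_mul_left 3 (sDav_lower k)) hk
  have hmT : m ≤ T := by omega
  have hdvdT : m ∣ T := by
    rw [hm, hT]
    exact pow_dvd_pow 2 ((Nat.pow_le_pow_iff_right (by norm_num)).1 (hm ▸ hT ▸ hmT))
  have hN : Fintype.card (Fin n → Fin 2) = 2 * T := by
    rw [hT]
    rw [Fintype.card_fun]
    simp only [Fintype.card_fin]
    have h1 : n - 1 + 1 = n := by omega
    calc (2 : ℕ) ^ n = 2 ^ (n - 1 + 1) := by rw [h1]
    _ = 2 * 2 ^ (n - 1) := by ring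
  obtain ⟨A, hAcard, hAdeg, hA11⟩ := grow f (davProp_pow k) hN h3 (T / m)
    (by rw [Nat.div_mul_cancel hdvdT])
  rw [Nat.div_mul_cancel hdvdT] at hAcard
  have hAc : Aᶜ = univ \ A := by simp [Finset.compl_eq_univ_sdiff]
  have hAccard : (Aᶜ : Finset (Fin n → Fin 2)).card = T := by
    rw [Finset.card_compl, hN, hAcard]
    omega
  -- c11 + c12 = T
  have hsplitA : (A.filter (fun x => f x ∈ A)).card +
      (A.filter (fun x => f x ∈ Aᶜ)).card = T := by
    rw [← hAcard]
    have : A.filter (fun x => f x ∈ Aᶜ) = A.filter (fun x => ¬ (f x ∈ A)) := by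
      ext x
      simp [Finset.mem_filter, Finset.mem_compl]
    rw [this]
    exact Finset.card_filter_add_card_filter_not _
  -- c11 + c21 = sum of indegrees over A
  have hfib : (univ.filter (fun x => f x ∈ A)).card =
      ∑ y ∈ A, (univ.filter (fun x => f x = y)).card := by
    have h1 : ((univ : Finset (Fin n → Fin 2)).filter (fun x => f x ∈ A)).card =
        ∑ y ∈ A, (((univ : Finset (Fin n → Fin 2)).filter (fun x => f x ∈ A)).filter
          (fun x => f x = y)).card :=
      Finset.card_eq_sum_card_fiberwise (fun x hx => (Finset.mem_filter.1 hx).2)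
    rw [h1]
    apply Finset.sum_congr rfl
    intro y hy
    congr 1
    ext x
    simp only [Finset.mem_filter, Finset.mem_univ, true_and]
    constructor
    · rintro ⟨-, h2⟩
      exact h2
    · rintro h2
      exact ⟨h2 ▸ hy, h2⟩
  have hsplitU : (A.filter (fun x => f x ∈ A)).card +
      (Aᶜ.filter (fun x => f x ∈ A)).card =
      (univ.filter (fun x => f x ∈ A)).card := by
    rw [hAc]
    rw [← Finset.card_union_of_disjoint]
    · congr 1
      rw [← Finset.filter_union]
      congr 1
      rw [Finset.union_sdiff_of_subset (Finset.subset_univ A)]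
    · exact Finset.disjoint_filter_filter (Finset.disjoint_sdiff)
  -- c21 + c22 = |Aᶜ|
  have hsplitAc : (Aᶜ.filter (fun x => f x ∈ A)).card +
      (Aᶜ.filter (fun x => f x ∈ Aᶜ)).card = T := by
    rw [← hAccard]
    have : Aᶜ.filter (fun x => f x ∈ Aᶜ) = Aᶜ.filter (fun x => ¬ (f x ∈ A)) := by
      ext x
      simp [Finset.mem_filter, Finset.mem_compl]
    rw [this]
    exact Finset.card_filter_add_card_filter_not _
  have hc21 : m ∣ (Aᶜ.filter (fun x => f x ∈ A)).card := by
    have hdvdU : m ∣ (univ.filter (fun x => f x ∈ A)).card := by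
      rw [hfib]; exact hAdeg
    have heq : (Aᶜ.filter (fun x => f x ∈ A)).card =
        (univ.filter (fun x => f x ∈ A)).card - (A.filter (fun x => f x ∈ A)).card := by
      omega
    rw [heq]
    exact Nat.dvd_sub hdvdU hA11
  refine ⟨A, hAcard, hA11, ?_, hc21, ?_⟩
  · have heq : (A.filter (fun x => f x ∈ Aᶜ)).card = T - (A.filter (fun x => f x ∈ A)).card := by
      omega
    rw [heq]
    exact Nat.dvd_sub hdvdT hA11
  · have heq : (Aᶜ.filter (fun x => f x ∈ Aᶜ)).card =
        T - (Aᶜ.filter (fun x => f x ∈ A)).card := by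
      omega
    rw [heq]
    exact Nat.dvd_sub hdvdT hc21
end
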